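/- Let Q be a seminormal quasi-crystal. The plactic congruence ≈ on F^⊗(Q) is a monoid congruence on the free monoid Q*: it is an equivalence relation on Q*, and for all u, v, u', v' ∈ Q*, if u ≈ v and u' ≈ v' then uu' ≈ vv'. -/

import Mathlib

/-! ## Root system setting -/

/-- The data of a root system `Φ` in a Euclidean space `V`, together with a choice of
simple roots `(α_i)_{i ∈ ι}` and a weight lattice `Λ`, with the integer-valued coroot
pairing `pair λ i = ⟨λ, α_i^∨⟩ = 2⟪λ, α_i⟫/⟪α_i, α_i⟫` on the weight lattice. -/
structure QCSetting (V : Type*) [NormedAddCommGroup V] [InnerProductSpace ℝ V]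
    (ι : Type*) where
  Φ : Set V
  finite : Φ.Finite
  nonempty : Φ.Nonempty
  zero_not_mem : (0 : V) ∉ Φ
  reflect_mem : ∀ a ∈ Φ, ∀ b ∈ Φ, b - (2 * (inner ℝ b a : ℝ) / (inner ℝ a a : ℝ)) • a ∈ Φ
  smul_root : ∀ a ∈ Φ, ∀ k : ℝ, k • a ∈ Φ → k = 1 ∨ k = -1
  simple : ι → V
  simple_mem : ∀ i, simple i ∈ Φ
  simple_indep : LinearIndependent ℝ simple
  Λ : AddSubgroup V
  lattice_spans : Submodule.span ℝ (Λ : Set V) = ⊤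
  root_mem_lattice : ∀ a ∈ Φ, a ∈ Λ
  pair : Λ → ι → ℤ
  pair_spec : ∀ (v : Λ) (i : ι),
    (pair v i : ℝ) = 2 * (inner ℝ (v : V) (simple i) : ℝ) / (inner ℝ (simple i) (simple i) : ℝ)

variable {V : Type*} [NormedAddCommGroup V] [InnerProductSpace ℝ V] {ι : Type*}

/-! ## Quasi-crystals -/

/-- The structure maps of a quasi-crystal of type `S` on an underlying set `Q`:
a weight map `wt` with values in the weight lattice, partial quasi-Kashiwara operators
`e i, f i : Q → Q ⊔ {⊥}` (realized as `Option`-valued maps, `none` playing the role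
of `⊥`), and maps `ε i, φ i : Q → ℤ ∪ {+∞}` (realized as `WithTop ℤ`). -/
structure QC (S : QCSetting V ι) (Q : Type*) where
  wt : Q → S.Λ
  e : ι → Q → Option Q
  f : ι → Q → Option Q
  ε : ι → Q → WithTop ℤ
  φ : ι → Q → WithTop ℤ

/-- `k`-fold iteration of a partial map `g : Q → Option Q` starting at `x`. -/
def optIter {Q : Type*} (g : Q → Option Q) (k : ℕ) (x : Q) : Option Q :=
  (fun o => o.bind g)^[k] (some x)

/-- The axioms of a seminormal quasi-crystal. -/
structure QC.IsSeminormal {S : QCSetting V ι} {Q : Type*} (𝒬 : QC S Q) : Prop where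
  phi_eq : ∀ i x, 𝒬.φ i x = 𝒬.ε i x + ((S.pair (𝒬.wt x) i : ℤ) : WithTop ℤ)
  wt_e : ∀ i x y, 𝒬.e i x = some y → (𝒬.wt y : V) = (𝒬.wt x : V) + S.simple i
  wt_f : ∀ i x y, 𝒬.f i x = some y → (𝒬.wt y : V) = (𝒬.wt x : V) - S.simple i
  e_iff_f : ∀ i x y, 𝒬.e i x = some y ↔ 𝒬.f i y = some x
  e_of_top : ∀ i x, 𝒬.ε i x = ⊤ → 𝒬.e i x = none
  f_of_top : ∀ i x, 𝒬.ε i x = ⊤ → 𝒬.f i x = none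
  eps_spec : ∀ i x, 𝒬.ε i x ≠ ⊤ → ∃ n : ℕ, 𝒬.ε i x = ((n : ℤ) : WithTop ℤ) ∧
    IsGreatest {k : ℕ | (optIter (𝒬.e i) k x).isSome} n
  phi_spec : ∀ i x, 𝒬.ε i x ≠ ⊤ → ∃ n : ℕ, 𝒬.φ i x = ((n : ℤ) : WithTop ℤ) ∧
    IsGreatest {k : ℕ | (optIter (𝒬.f i) k x).isSome} n

/-- A seminormal crystal is a seminormal quasi-crystal in which `ε i x ≠ +∞` always. -/
def QC.IsSeminormalCrystal {S : QCSetting V ι} {Q : Type*} (𝒬 : QC S Q) : Prop :=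
  𝒬.IsSeminormal ∧ ∀ i x, 𝒬.ε i x ≠ ⊤

/-! ## Tensor product -/

/-- The tensor product of two quasi-crystals of the same type. -/
noncomputable def QC.tensor {S : QCSetting V ι} {Q Q' : Type*} (𝒬 : QC S Q) (𝒬' : QC S Q') :
    QC S (Q × Q') where
  wt p := 𝒬.wt p.1 + 𝒬'.wt p.2
  ε i p := max (𝒬.ε i p.1) (𝒬'.ε i p.2 + ((-(S.pair (𝒬.wt p.1) i) : ℤ) : WithTop ℤ))
  φ i p := max (𝒬.φ i p.1 + ((S.pair (𝒬'.wt p.2) i : ℤ) : WithTop ℤ)) (𝒬'.φ i p.2)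
  e i p := if 𝒬'.ε i p.2 ≤ 𝒬.φ i p.1
    then (𝒬.e i p.1).map (fun y => (y, p.2))
    else (𝒬'.e i p.2).map (fun y => (p.1, y))
  f i p := if 𝒬'.ε i p.2 < 𝒬.φ i p.1
    then (𝒬.f i p.1).map (fun y => (y, p.2))
    else (𝒬'.f i p.2).map (fun y => (p.1, y))

/-! ## Quasi-tensor product -/

/-- The (inverse-free) quasi-tensor product of two quasi-crystals of the same type. -/
noncomputable def QC.qtensor {S : QCSetting V ι} {Q Q' : Type*} (𝒬 : QC S Q) (𝒬' : QC S Q') :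
    QC S (Q × Q') where
  wt p := 𝒬.wt p.1 + 𝒬'.wt p.2
  ε i p := if 0 < 𝒬.φ i p.1 ∧ 0 < 𝒬'.ε i p.2 then ⊤
    else max (𝒬.ε i p.1) (𝒬'.ε i p.2 + ((-(S.pair (𝒬.wt p.1) i) : ℤ) : WithTop ℤ))
  φ i p := if 0 < 𝒬.φ i p.1 ∧ 0 < 𝒬'.ε i p.2 then ⊤
    else max (𝒬.φ i p.1 + ((S.pair (𝒬'.wt p.2) i : ℤ) : WithTop ℤ)) (𝒬'.φ i p.2)
  e i p := if 0 < 𝒬.φ i p.1 ∧ 0 < 𝒬'.ε i p.2 then none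
    else if 𝒬'.ε i p.2 ≤ 𝒬.φ i p.1 then (𝒬.e i p.1).map (fun y => (y, p.2))
    else (𝒬'.e i p.2).map (fun y => (p.1, y))
  f i p := if 0 < 𝒬.φ i p.1 ∧ 0 < 𝒬'.ε i p.2 then none
    else if 𝒬'.ε i p.2 < 𝒬.φ i p.1 then (𝒬.f i p.1).map (fun y => (y, p.2))
    else (𝒬'.f i p.2).map (fun y => (p.1, y))

/-! ## Homomorphisms -/

/-- A quasi-crystal homomorphism `ψ : 𝒬 → 𝒬'`, i.e. a map `Q ⊔ {⊥} → Q' ⊔ {⊥}`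
(realized on `Option`s, `none` playing the role of `⊥`) compatible with the structure
maps in the appropriate sense. -/
structure QCHom {S : QCSetting V ι} {Q Q' : Type*} (𝒬 : QC S Q) (𝒬' : QC S Q') where
  toFun : Option Q → Option Q'
  map_none : toFun none = none
  wt_eq : ∀ x y, toFun (some x) = some y → 𝒬'.wt y = 𝒬.wt x
  eps_eq : ∀ i x y, toFun (some x) = some y → 𝒬'.ε i y = 𝒬.ε i x
  phi_eq : ∀ i x y, toFun (some x) = some y → 𝒬'.φ i y = 𝒬.φ i x
  comm_e : ∀ i x x' y y', 𝒬.e i x = some x' → toFun (some x) = some y →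
    toFun (some x') = some y' → 𝒬'.e i y = some y'
  comm_f : ∀ i x x' y y', 𝒬.f i x = some x' → toFun (some x) = some y →
    toFun (some x') = some y' → 𝒬'.f i y = some y'

/-! ## The free `⊗`-quasi-crystal monoid -/

/-- Weight of a word: the sum of the weights of its letters. -/
def freeWt {S : QCSetting V ι} {Q : Type*} (𝒬 : QC S Q) : List Q → S.Λ
  | [] => 0
  | x :: w => 𝒬.wt x + freeWt 𝒬 w

/-- The map `ε̈_i` of the free `⊗`-quasi-crystal monoid. -/
def freeEps {S : QCSetting V ι} {Q : Type*} (𝒬 : QC S Q) (i : ι) : List Q → WithTop ℤ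
  | [] => 0
  | x :: w => max (𝒬.ε i x) (freeEps 𝒬 i w + ((-(S.pair (𝒬.wt x) i) : ℤ) : WithTop ℤ))

/-- The map `φ̈_i` of the free `⊗`-quasi-crystal monoid. -/
def freePhi {S : QCSetting V ι} {Q : Type*} (𝒬 : QC S Q) (i : ι) : List Q → WithTop ℤ
  | [] => 0
  | x :: w => max (𝒬.φ i x + ((S.pair (freeWt 𝒬 w) i : ℤ) : WithTop ℤ)) (freePhi 𝒬 i w)

/-- The operator `ë_i` of the free `⊗`-quasi-crystal monoid. -/
noncomputable def freeE {S : QCSetting V ι} {Q : Type*} (𝒬 : QC S Q) (i : ι) : List Q → Option (List Q)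
  | [] => none
  | x :: w => if freeEps 𝒬 i w ≤ 𝒬.φ i x
      then (𝒬.e i x).map (· :: w)
      else (freeE 𝒬 i w).map (x :: ·)

/-- The operator `f̈_i` of the free `⊗`-quasi-crystal monoid. -/
noncomputable def freeF {S : QCSetting V ι} {Q : Type*} (𝒬 : QC S Q) (i : ι) : List Q → Option (List Q)
  | [] => none
  | x :: w => if freeEps 𝒬 i w < 𝒬.φ i x
      then (𝒬.f i x).map (· :: w)
      else (freeF 𝒬 i w).map (x :: ·)

/-- The quasi-crystal structure of the free `⊗`-quasi-crystal monoid `F^⊗(𝒬)`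
on the free monoid `Q*`. -/
noncomputable def freeTensorQC {S : QCSetting V ι} {Q : Type*} (𝒬 : QC S Q) : QC S (FreeMonoid Q) where
  wt w := freeWt 𝒬 (FreeMonoid.toList w)
  ε i w := freeEps 𝒬 i (FreeMonoid.toList w)
  φ i w := freePhi 𝒬 i (FreeMonoid.toList w)
  e i w := (freeE 𝒬 i (FreeMonoid.toList w)).map (fun l => FreeMonoid.ofList l)
  f i w := (freeF 𝒬 i (FreeMonoid.toList w)).map (fun l => FreeMonoid.ofList l)

/-! ## The free `⊗̈`-quasi-crystal monoid -/

/-- The map `ε̈_i` of the free `⊗̈`-quasi-crystal monoid. -/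
noncomputable def qfreeEps {S : QCSetting V ι} {Q : Type*} (𝒬 : QC S Q) (i : ι) : List Q → WithTop ℤ
  | [] => 0
  | x :: w => if 0 < 𝒬.φ i x ∧ 0 < qfreeEps 𝒬 i w then ⊤
      else max (𝒬.ε i x) (qfreeEps 𝒬 i w + ((-(S.pair (𝒬.wt x) i) : ℤ) : WithTop ℤ))

/-- The map `φ̈_i` of the free `⊗̈`-quasi-crystal monoid. -/
noncomputable def qfreePhi {S : QCSetting V ι} {Q : Type*} (𝒬 : QC S Q) (i : ι) : List Q → WithTop ℤ
  | [] => 0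
  | x :: w => if 0 < 𝒬.φ i x ∧ 0 < qfreeEps 𝒬 i w then ⊤
      else max (𝒬.φ i x + ((S.pair (freeWt 𝒬 w) i : ℤ) : WithTop ℤ)) (qfreePhi 𝒬 i w)

/-- The operator `ë_i` of the free `⊗̈`-quasi-crystal monoid. -/
noncomputable def qfreeE {S : QCSetting V ι} {Q : Type*} (𝒬 : QC S Q) (i : ι) : List Q → Option (List Q)
  | [] => none
  | x :: w => if 0 < 𝒬.φ i x ∧ 0 < qfreeEps 𝒬 i w then none
      else if qfreeEps 𝒬 i w ≤ 𝒬.φ i x then (𝒬.e i x).map (· :: w)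
      else (qfreeE 𝒬 i w).map (x :: ·)

/-- The operator `f̈_i` of the free `⊗̈`-quasi-crystal monoid. -/
noncomputable def qfreeF {S : QCSetting V ι} {Q : Type*} (𝒬 : QC S Q) (i : ι) : List Q → Option (List Q)
  | [] => none
  | x :: w => if 0 < 𝒬.φ i x ∧ 0 < qfreeEps 𝒬 i w then none
      else if qfreeEps 𝒬 i w < 𝒬.φ i x then (𝒬.f i x).map (· :: w)
      else (qfreeF 𝒬 i w).map (x :: ·)

/-- The quasi-crystal structure of the free `⊗̈`-quasi-crystal monoid `F^⊗̈(𝒬)`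
on the free monoid `Q*`. -/
noncomputable def freeQTensorQC {S : QCSetting V ι} {Q : Type*} (𝒬 : QC S Q) : QC S (FreeMonoid Q) where
  wt w := freeWt 𝒬 (FreeMonoid.toList w)
  ε i w := qfreeEps 𝒬 i (FreeMonoid.toList w)
  φ i w := qfreePhi 𝒬 i (FreeMonoid.toList w)
  e i w := (qfreeE 𝒬 i (FreeMonoid.toList w)).map (fun l => FreeMonoid.ofList l)
  f i w := (qfreeF 𝒬 i (FreeMonoid.toList w)).map (fun l => FreeMonoid.ofList l)

/-! ## Connected components, plactic and hypoplactic congruences -/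

/-- Two elements are connected in the quasi-crystal graph if they are related by the
reflexive-symmetric-transitive closure of the edge relation given by the
quasi-Kashiwara operators. -/
def QC.conn {S : QCSetting V ι} {Q : Type*} (𝒬 : QC S Q) : Q → Q → Prop :=
  Relation.EqvGen (fun x y => ∃ i, 𝒬.f i x = some y ∨ 𝒬.f i y = some x ∨
    𝒬.e i x = some y ∨ 𝒬.e i y = some x)

/-- The connected component `𝒬(x)` of a quasi-crystal `𝒬` containing `x`, as a
quasi-crystal on the subtype of elements connected with `x`. -/
def QC.compQC {S : QCSetting V ι} {Q : Type*} (𝒬 : QC S Q) (x : Q) :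
    QC S {y : Q // 𝒬.conn x y} where
  wt y := 𝒬.wt y.1
  ε i y := 𝒬.ε i y.1
  φ i y := 𝒬.φ i y.1
  e i y := (𝒬.e i y.1).pmap (fun z hz => (⟨z, hz⟩ : {y : Q // 𝒬.conn x y}))
    (fun z hz => Relation.EqvGen.trans _ _ _ y.2
      (Relation.EqvGen.rel _ _ ⟨i, Or.inr (Or.inr (Or.inl hz))⟩))
  f i y := (𝒬.f i y.1).pmap (fun z hz => (⟨z, hz⟩ : {y : Q // 𝒬.conn x y}))
    (fun z hz => Relation.EqvGen.trans _ _ _ y.2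
      (Relation.EqvGen.rel _ _ ⟨i, Or.inl hz⟩))

/-- The plactic congruence: `u ≈ v` iff there is a quasi-crystal isomorphism between the
connected components of `u` and `v` in `F^⊗(𝒬)` mapping `u` to `v`. -/
def placticRel {S : QCSetting V ι} {Q : Type*} (𝒬 : QC S Q)
    (u v : FreeMonoid Q) : Prop :=
  ∃ ψ : QCHom ((freeTensorQC 𝒬).compQC u) ((freeTensorQC 𝒬).compQC v),
    Function.Bijective ψ.toFun ∧
    ψ.toFun (some ⟨u, Relation.EqvGen.refl u⟩) = some ⟨v, Relation.EqvGen.refl v⟩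

/-- The hypoplactic congruence: `u ∼̈ v` iff there is a quasi-crystal isomorphism between
the connected components of `u` and `v` in `F^⊗̈(𝒬)` mapping `u` to `v`. -/
def hypoRel {S : QCSetting V ι} {Q : Type*} (𝒬 : QC S Q)
    (u v : FreeMonoid Q) : Prop :=
  ∃ ψ : QCHom ((freeQTensorQC 𝒬).compQC u) ((freeQTensorQC 𝒬).compQC v),
    Function.Bijective ψ.toFun ∧
    ψ.toFun (some ⟨u, Relation.EqvGen.refl u⟩) = some ⟨v, Relation.EqvGen.refl v⟩

/-! ## Quasi-crystal monoids -/

/-- A monoid is equidivisible if whenever `x₁y₁ = x₂y₂` one of the factorizations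
refines the other. -/
def Equidivisible (M : Type*) [Monoid M] : Prop :=
  ∀ x₁ x₂ y₁ y₂ : M, x₁ * y₁ = x₂ * y₂ →
    ∃ z : M, (x₂ = x₁ * z ∧ y₁ = z * y₂) ∨ (x₁ = x₂ * z ∧ y₂ = z * y₁)

/-- A `⊗`-quasi-crystal monoid: a seminormal quasi-crystal structure on a monoid whose
structure maps interact with the multiplication by the tensor-product rules. -/
structure IsTensorQCMon {S : QCSetting V ι} {M : Type*} [Monoid M] (𝒬 : QC S M) : Prop where
  seminormal : 𝒬.IsSeminormal
  wt_mul : ∀ x y, 𝒬.wt (x * y) = 𝒬.wt x + 𝒬.wt y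
  eps_mul : ∀ i x y, 𝒬.ε i (x * y) =
    max (𝒬.ε i x) (𝒬.ε i y + ((-(S.pair (𝒬.wt x) i) : ℤ) : WithTop ℤ))
  phi_mul : ∀ i x y, 𝒬.φ i (x * y) =
    max (𝒬.φ i x + ((S.pair (𝒬.wt y) i : ℤ) : WithTop ℤ)) (𝒬.φ i y)
  e_mul : ∀ i x y, 𝒬.e i (x * y) =
    if 𝒬.ε i y ≤ 𝒬.φ i x then (𝒬.e i x).map (· * y) else (𝒬.e i y).map (x * ·)
  f_mul : ∀ i x y, 𝒬.f i (x * y) =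
    if 𝒬.ε i y < 𝒬.φ i x then (𝒬.f i x).map (· * y) else (𝒬.f i y).map (x * ·)

/-- A `⊗̈`-quasi-crystal monoid: a seminormal quasi-crystal structure on a monoid such
that `x ⊗̈ y ↦ x·y` induces a quasi-crystal homomorphism `M ⊗̈ M → M`. -/
def IsQTensorQCMon {S : QCSetting V ι} {M : Type*} [Monoid M] (𝒬 : QC S M) : Prop :=
  𝒬.IsSeminormal ∧
  ∃ ψ : QCHom (𝒬.qtensor 𝒬) 𝒬, ψ.toFun = Option.map (fun p => p.1 * p.2)

/-! ## The bicyclic monoid with zero `B₀` and the monoid `Z₀` -/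

/-- The bicyclic monoid `⟨−, + | (+)(−) = ε⟩`: elements are normal forms `(−)^a(+)^b`. -/
structure Bic where
  neg : ℕ
  pos : ℕ
deriving DecidableEq

instance : Mul Bic :=
  ⟨fun x y => ⟨x.neg + (y.neg - x.pos), y.pos + (x.pos - y.neg)⟩⟩

theorem Bic.mul_def (x y : Bic) :
    x * y = ⟨x.neg + (y.neg - x.pos), y.pos + (x.pos - y.neg)⟩ := rfl

instance : One Bic := ⟨⟨0, 0⟩⟩

theorem Bic.one_def : (1 : Bic) = ⟨0, 0⟩ := rfl

instance : Monoid Bic where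
  mul_assoc x y z := by
    simp only [Bic.mul_def, Bic.mk.injEq]
    omega
  one_mul x := by
    simp only [Bic.one_def, Bic.mul_def]
    cases x
    simp only [Bic.mk.injEq]
    omega
  mul_one x := by
    simp only [Bic.one_def, Bic.mul_def]
    cases x
    simp only [Bic.mk.injEq]
    omega

/-- The bicyclic monoid with a zero element adjoined,
`B₀ = ⟨0, −, + | (+)(−) = ε, 0x = x0 = 0⟩`. -/
abbrev B0 : Type := WithZero Bic

/-- The monoid `Z₀ = ⟨0, −, + | (+)(−) = 0, 0x = x0 = 0⟩`: the nonzero elements are the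
normal forms `(−)^a(+)^b`. -/
inductive Z0 : Type
  | zero : Z0
  | word : ℕ → ℕ → Z0
deriving DecidableEq

instance : Mul Z0 :=
  ⟨fun x y => match x, y with
    | Z0.zero, _ => Z0.zero
    | _, Z0.zero => Z0.zero
    | Z0.word a b, Z0.word c d =>
        if 0 < b ∧ 0 < c then Z0.zero else Z0.word (a + c) (b + d)⟩

instance : One Z0 := ⟨Z0.word 0 0⟩

instance : Zero Z0 := ⟨Z0.zero⟩

theorem Z0.one_def : (1 : Z0) = Z0.word 0 0 := rfl
theorem Z0.zero_def : (0 : Z0) = Z0.zero := rfl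
theorem Z0.zero_mul' (x : Z0) : Z0.zero * x = Z0.zero := by cases x <;> rfl
theorem Z0.mul_zero' (x : Z0) : x * Z0.zero = Z0.zero := by cases x <;> rfl
theorem Z0.word_mul_word (a b c d : ℕ) :
    Z0.word a b * Z0.word c d =
      if 0 < b ∧ 0 < c then Z0.zero else Z0.word (a + c) (b + d) := rfl

instance : MonoidWithZero Z0 where
  mul_assoc x y z := by
    cases x <;> cases y <;> cases z <;>
      simp only [Z0.zero_mul', Z0.mul_zero', Z0.word_mul_word]
    · split_ifs <;> simp_all [Z0.zero_mul', Z0.mul_zero', Z0.word_mul_word] <;>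
        split_ifs <;> simp_all <;> omega
  one_mul x := by
    cases x
    · rfl
    · simp [Z0.one_def, Z0.word_mul_word]
  mul_one x := by
    cases x
    · rfl
    · simp [Z0.one_def, Z0.word_mul_word]
  zero_mul x := by cases x <;> rfl
  mul_zero x := by cases x <;> rfl

/-! ## Signature maps -/

/-- The `i`-signature map for the tensor product `⊗`:
`sgn_i^⊗(w) = 0` if `ε̈_i(w) = +∞`, and `(−)^{ε̈_i(w)}(+)^{φ̈_i(w)}` otherwise. -/
noncomputable def tsgn {V : Type*} [NormedAddCommGroup V] [InnerProductSpace ℝ V] {ι : Type*}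
    {S : QCSetting V ι} {Q : Type*} (𝒬 : QC S Q) (i : ι) (w : FreeMonoid Q) : B0 :=
  if freeEps 𝒬 i (FreeMonoid.toList w) = ⊤ then 0
  else ↑(Bic.mk ((freeEps 𝒬 i (FreeMonoid.toList w)).untopD 0).toNat
      ((freePhi 𝒬 i (FreeMonoid.toList w)).untopD 0).toNat)

/-- The `i`-signature map for the quasi-tensor product `⊗̈`:
`sgn_i^⊗̈(w) = 0` if `ε̈_i(w) = +∞`, and `(−)^{ε̈_i(w)}(+)^{φ̈_i(w)}` otherwise. -/
noncomputable def qsgn {V : Type*} [NormedAddCommGroup V] [InnerProductSpace ℝ V] {ι : Type*}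
    {S : QCSetting V ι} {Q : Type*} (𝒬 : QC S Q) (i : ι) (w : FreeMonoid Q) : Z0 :=
  if qfreeEps 𝒬 i (FreeMonoid.toList w) = ⊤ then 0
  else Z0.word ((qfreeEps 𝒬 i (FreeMonoid.toList w)).untopD 0).toNat
      ((qfreePhi 𝒬 i (FreeMonoid.toList w)).untopD 0).toNat


/-! ## Auxiliary lemmas -/

section AuxArith

theorem wt_add_cast (a : WithTop ℤ) (c d : ℤ) :
    a + (c : WithTop ℤ) + (d : WithTop ℤ) = a + ((c + d : ℤ) : WithTop ℤ) := by
  rw [add_assoc]; norm_cast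

theorem wt_max_add (a b : WithTop ℤ) (c : ℤ) :
    max a b + (c : WithTop ℤ) = max (a + c) (b + c) :=
  (max_add_add_right a b (c : WithTop ℤ)).symm

theorem wt_add_le_iff (a b : WithTop ℤ) (c : ℤ) :
    a + (c : WithTop ℤ) ≤ b + c ↔ a ≤ b :=
  WithTop.add_le_add_iff_right (by simp)

theorem wt_add_lt_iff (a b : WithTop ℤ) (c : ℤ) :
    a + (c : WithTop ℤ) < b + c ↔ a < b :=
  WithTop.add_lt_add_iff_right (by simp)

theorem wt_add_eq_top (a : WithTop ℤ) (c : ℤ) : a + (c : WithTop ℤ) = ⊤ ↔ a = ⊤ := by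
  simp [WithTop.add_eq_top]

theorem wt_lt_iff_add_one_le {a b : WithTop ℤ} (ha : a ≠ ⊤) : a < b ↔ a + 1 ≤ b := by
  lift a to ℤ using ha
  induction b using WithTop.recTopCoe with
  | top => simp [WithTop.coe_lt_top]
  | coe b => exact_mod_cast Int.lt_iff_add_one_le

theorem wt_lt_add_one {a : WithTop ℤ} (ha : a ≠ ⊤) : a < a + 1 := by
  lift a to ℤ using ha; norm_cast; omega

theorem wt_cancel_add_cast (a : WithTop ℤ) (c : ℤ) :
    a + (c : WithTop ℤ) + ((-c : ℤ) : WithTop ℤ) = a := by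
  rw [wt_add_cast]; simp

end AuxArith

section AuxPair

variable {V : Type*} [NormedAddCommGroup V] [InnerProductSpace ℝ V] {ι : Type*}
  {S : QCSetting V ι}

theorem QCSetting.inner_simple_ne_zero (S : QCSetting V ι) (i : ι) :
    (inner ℝ (S.simple i) (S.simple i) : ℝ) ≠ 0 := by
  rw [Ne, inner_self_eq_zero]
  intro h0
  exact S.zero_not_mem (h0 ▸ S.simple_mem i)

theorem QCSetting.pair_add' (S : QCSetting V ι) (v w : S.Λ) (i : ι) :
    S.pair (v + w) i = S.pair v i + S.pair w i := by
  have : ((S.pair (v + w) i : ℤ) : ℝ) = ((S.pair v i + S.pair w i : ℤ) : ℝ) := by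
    push_cast
    rw [S.pair_spec, S.pair_spec, S.pair_spec]
    have : ((v + w : S.Λ) : V) = (v : V) + (w : V) := rfl
    rw [this, inner_add_left]
    ring
  exact_mod_cast this

theorem QCSetting.pair_zero' (S : QCSetting V ι) (i : ι) : S.pair 0 i = 0 := by
  have h := S.pair_add' 0 0 i
  rw [add_zero] at h
  omega

theorem QCSetting.pair_shift_e (S : QCSetting V ι) {x y : S.Λ} {i : ι}
    (hxy : (y : V) = (x : V) + S.simple i) :
    S.pair y i = S.pair x i + 2 := by
  have hne := S.inner_simple_ne_zero i
  have : ((S.pair y i : ℤ) : ℝ) = ((S.pair x i + 2 : ℤ) : ℝ) := by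
    push_cast
    rw [S.pair_spec, S.pair_spec, hxy, inner_add_left]
    field_simp
  exact_mod_cast this

theorem QCSetting.pair_shift_f (S : QCSetting V ι) {x y : S.Λ} {i : ι}
    (hxy : (y : V) = (x : V) - S.simple i) :
    S.pair y i = S.pair x i - 2 := by
  have : (x : V) = (y : V) + S.simple i := by rw [hxy]; abel
  have h2 := S.pair_shift_e this
  omega

end AuxPair

section AuxOptIter

variable {Q : Type*} {g : Q → Option Q}

theorem optIter_zero (g : Q → Option Q) (x : Q) : optIter g 0 x = some x := rfl

theorem optIter_none (g : Q → Option Q) (k : ℕ) :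
    (fun o => o.bind g)^[k] (none : Option Q) = none := by
  induction k with
  | zero => rfl
  | succ k ih => rw [Function.iterate_succ_apply]; simpa using ih

theorem optIter_succ_of_some {x y : Q} (hxy : g x = some y) (k : ℕ) :
    optIter g (k + 1) x = optIter g k y := by
  unfold optIter
  rw [Function.iterate_succ_apply]
  simp [hxy]

theorem optIter_succ_of_none {x : Q} (hx : g x = none) (k : ℕ) :
    optIter g (k + 1) x = none := by
  unfold optIter
  rw [Function.iterate_succ_apply]
  simp [hx, optIter_none]

theorem optIter_isSome_mono {x : Q} {j k : ℕ} (hjk : j ≤ k)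
    (hk : (optIter g k x).isSome) : (optIter g j x).isSome := by
  obtain ⟨m, rfl⟩ := Nat.exists_eq_add_of_le hjk
  unfold optIter at hk ⊢
  rw [Nat.add_comm, Function.iterate_add_apply] at hk
  by_contra hj
  rw [Option.not_isSome_iff_eq_none] at hj
  rw [hj, optIter_none] at hk
  simp at hk

theorem optIter_one (g : Q → Option Q) (x : Q) : optIter g 1 x = g x := by
  unfold optIter
  simp

end AuxOptIter
section AuxQ

variable {V : Type*} [NormedAddCommGroup V] [InnerProductSpace ℝ V] {ι : Type*}
  {S : QCSetting V ι} {Q : Type*} {𝒬 : QC S Q}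

theorem q_eps_nonneg (h : 𝒬.IsSeminormal) (i : ι) (x : Q) : 0 ≤ 𝒬.ε i x := by
  by_cases ht : 𝒬.ε i x = ⊤
  · rw [ht]; exact le_top
  · obtain ⟨n, hn, -⟩ := h.eps_spec i x ht
    rw [hn]
    exact_mod_cast Int.ofNat_nonneg n

theorem q_phi_top_iff (h : 𝒬.IsSeminormal) (i : ι) (x : Q) :
    𝒬.φ i x = ⊤ ↔ 𝒬.ε i x = ⊤ := by
  rw [h.phi_eq i x, wt_add_eq_top]

theorem q_phi_nonneg (h : 𝒬.IsSeminormal) (i : ι) (x : Q) : 0 ≤ 𝒬.φ i x := by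
  by_cases ht : 𝒬.ε i x = ⊤
  · rw [(q_phi_top_iff h i x).2 ht]; exact le_top
  · obtain ⟨n, hn, -⟩ := h.phi_spec i x ht
    rw [hn]
    exact_mod_cast Int.ofNat_nonneg n

theorem q_e_isSome (h : 𝒬.IsSeminormal) (i : ι) (x : Q) :
    (𝒬.e i x).isSome ↔ (𝒬.ε i x ≠ ⊤ ∧ 0 < 𝒬.ε i x) := by
  constructor
  · intro hs
    have ht : 𝒬.ε i x ≠ ⊤ := by
      intro ht
      rw [h.e_of_top i x ht] at hs
      simp at hs
    refine ⟨ht, ?_⟩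
    obtain ⟨n, hn, hmem, hub⟩ := h.eps_spec i x ht
    have h1 : 1 ∈ {k : ℕ | (optIter (𝒬.e i) k x).isSome} := by
      rw [Set.mem_setOf_eq, optIter_one]
      exact hs
    have := hub h1
    rw [hn]
    exact_mod_cast this
  · rintro ⟨ht, hpos⟩
    obtain ⟨n, hn, hmem, hub⟩ := h.eps_spec i x ht
    have hn1 : 1 ≤ n := by
      rw [hn] at hpos
      exact_mod_cast hpos
    have := optIter_isSome_mono hn1 hmem
    rwa [optIter_one] at this

theorem q_f_isSome (h : 𝒬.IsSeminormal) (i : ι) (x : Q) :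
    (𝒬.f i x).isSome ↔ (𝒬.ε i x ≠ ⊤ ∧ 0 < 𝒬.φ i x) := by
  constructor
  · intro hs
    have ht : 𝒬.ε i x ≠ ⊤ := by
      intro ht
      rw [h.f_of_top i x ht] at hs
      simp at hs
    refine ⟨ht, ?_⟩
    obtain ⟨n, hn, hmem, hub⟩ := h.phi_spec i x ht
    have h1 : 1 ∈ {k : ℕ | (optIter (𝒬.f i) k x).isSome} := by
      rw [Set.mem_setOf_eq, optIter_one]
      exact hs
    have := hub h1
    rw [hn]
    exact_mod_cast this
  · rintro ⟨ht, hpos⟩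
    obtain ⟨n, hn, hmem, hub⟩ := h.phi_spec i x ht
    have hn1 : 1 ≤ n := by
      rw [hn] at hpos
      exact_mod_cast hpos
    have := optIter_isSome_mono hn1 hmem
    rwa [optIter_one] at this

theorem q_ne_top_of_e (h : 𝒬.IsSeminormal) {i : ι} {x y : Q} (he : 𝒬.e i x = some y) :
    𝒬.ε i x ≠ ⊤ ∧ 𝒬.ε i y ≠ ⊤ := by
  have hf : 𝒬.f i y = some x := (h.e_iff_f i x y).1 he
  constructor
  · intro ht; rw [h.e_of_top i x ht] at he; simp at he
  · intro ht; rw [h.f_of_top i y ht] at hf; simp at hf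

theorem q_eps_e (h : 𝒬.IsSeminormal) {i : ι} {x y : Q} (he : 𝒬.e i x = some y) :
    𝒬.ε i x = 𝒬.ε i y + 1 := by
  obtain ⟨htx, hty⟩ := q_ne_top_of_e h he
  obtain ⟨n, hn, hmem, hub⟩ := h.eps_spec i x htx
  obtain ⟨m, hm, hmem', hub'⟩ := h.eps_spec i y hty
  have hiter : ∀ k, optIter (𝒬.e i) (k + 1) x = optIter (𝒬.e i) k y :=
    fun k => optIter_succ_of_some he k
  have h1 : m + 1 ≤ n := by
    refine hub ?_
    rw [Set.mem_setOf_eq, hiter m]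
    exact hmem'
  have h2 : n ≤ m + 1 := by
    rcases Nat.eq_zero_or_pos n with h0 | h0
    · omega
    · obtain ⟨n', rfl⟩ := Nat.exists_eq_add_of_le h0
      have : n' ≤ m := by
        refine hub' ?_
        rw [Set.mem_setOf_eq, ← hiter n']
        rw [Nat.add_comm 1 n'] at hmem
        exact hmem
      omega
  have : n = m + 1 := le_antisymm h2 h1
  rw [hn, hm, this]
  push_cast
  rfl

theorem q_phi_e (h : 𝒬.IsSeminormal) {i : ι} {x y : Q} (he : 𝒬.e i x = some y) :
    𝒬.φ i y = 𝒬.φ i x + 1 := by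
  obtain ⟨htx, hty⟩ := q_ne_top_of_e h he
  have hf : 𝒬.f i y = some x := (h.e_iff_f i x y).1 he
  obtain ⟨n, hn, hmem, hub⟩ := h.phi_spec i x htx
  obtain ⟨m, hm, hmem', hub'⟩ := h.phi_spec i y hty
  have hiter : ∀ k, optIter (𝒬.f i) (k + 1) y = optIter (𝒬.f i) k x :=
    fun k => optIter_succ_of_some hf k
  have h1 : n + 1 ≤ m := by
    refine hub' ?_
    rw [Set.mem_setOf_eq, hiter n]
    exact hmem
  have h2 : m ≤ n + 1 := by
    rcases Nat.eq_zero_or_pos m with h0 | h0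
    · omega
    · obtain ⟨m', rfl⟩ := Nat.exists_eq_add_of_le h0
      have : m' ≤ n := by
        refine hub ?_
        rw [Set.mem_setOf_eq, ← hiter m']
        rw [Nat.add_comm 1 m'] at hmem'
        exact hmem'
      omega
  have : m = n + 1 := le_antisymm h2 h1
  rw [hn, hm, this]
  push_cast
  rfl

theorem q_eps_f (h : 𝒬.IsSeminormal) {i : ι} {x y : Q} (hf : 𝒬.f i x = some y) :
    𝒬.ε i y = 𝒬.ε i x + 1 :=
  q_eps_e h ((h.e_iff_f i y x).2 hf)

theorem q_phi_f (h : 𝒬.IsSeminormal) {i : ι} {x y : Q} (hf : 𝒬.f i x = some y) :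
    𝒬.φ i x = 𝒬.φ i y + 1 :=
  q_phi_e h ((h.e_iff_f i y x).2 hf)

theorem q_phi_ne_top (h : 𝒬.IsSeminormal) {i : ι} {x : Q} (ht : 𝒬.ε i x ≠ ⊤) :
    𝒬.φ i x ≠ ⊤ := fun hh => ht ((q_phi_top_iff h i x).1 hh)

end AuxQ
section AuxFree

variable {V : Type*} [NormedAddCommGroup V] [InnerProductSpace ℝ V] {ι : Type*}
  {S : QCSetting V ι} {Q : Type*} {𝒬 : QC S Q}

theorem wt_sub_le_iff (a b : WithTop ℤ) (c : ℤ) :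
    a + ((-c : ℤ) : WithTop ℤ) ≤ b ↔ a ≤ b + (c : WithTop ℤ) := by
  rw [← wt_add_le_iff (a + ((-c : ℤ) : WithTop ℤ)) b c, wt_add_cast]
  simp

theorem wt_sub_lt_iff (a b : WithTop ℤ) (c : ℤ) :
    a + ((-c : ℤ) : WithTop ℤ) < b ↔ a < b + (c : WithTop ℤ) := by
  rw [← wt_add_lt_iff (a + ((-c : ℤ) : WithTop ℤ)) b c, wt_add_cast]
  simp

theorem wt_le_sub_iff (a b : WithTop ℤ) (c : ℤ) :
    a ≤ b + ((-c : ℤ) : WithTop ℤ) ↔ a + (c : WithTop ℤ) ≤ b := by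
  rw [← wt_add_le_iff a (b + ((-c : ℤ) : WithTop ℤ)) c, wt_add_cast]
  simp

theorem wt_lt_sub_iff (a b : WithTop ℤ) (c : ℤ) :
    a < b + ((-c : ℤ) : WithTop ℤ) ↔ a + (c : WithTop ℤ) < b := by
  rw [← wt_add_lt_iff a (b + ((-c : ℤ) : WithTop ℤ)) c, wt_add_cast]
  simp

theorem freeWt_append (𝒬 : QC S Q) (a b : List Q) :
    freeWt 𝒬 (a ++ b) = freeWt 𝒬 a + freeWt 𝒬 b := by
  induction a with
  | nil => simp [freeWt]
  | cons x a ih => simp [freeWt, ih, add_assoc]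

theorem freeEps_nonneg (h : 𝒬.IsSeminormal) (i : ι) (w : List Q) :
    0 ≤ freeEps 𝒬 i w := by
  induction w with
  | nil => exact le_refl 0
  | cons x w ih => exact le_trans (q_eps_nonneg h i x) (le_max_left _ _)

theorem freePhi_nonneg (h : 𝒬.IsSeminormal) (i : ι) (w : List Q) :
    0 ≤ freePhi 𝒬 i w := by
  induction w with
  | nil => exact le_refl 0
  | cons x w ih => exact le_trans ih (le_max_right _ _)

theorem freePhi_eq_eps (h : 𝒬.IsSeminormal) (i : ι) (w : List Q) :
    freePhi 𝒬 i w = freeEps 𝒬 i w + ((S.pair (freeWt 𝒬 w) i : ℤ) : WithTop ℤ) := by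
  induction w with
  | nil =>
    show (0 : WithTop ℤ) = 0 + _
    rw [show freeWt 𝒬 [] = 0 from rfl, S.pair_zero']
    simp
  | cons x w ih =>
    show max (𝒬.φ i x + _) (freePhi 𝒬 i w) = max (𝒬.ε i x) (freeEps 𝒬 i w + _) + _
    rw [show freeWt 𝒬 (x :: w) = 𝒬.wt x + freeWt 𝒬 w from rfl, S.pair_add',
      wt_max_add, ← wt_add_cast, ← h.phi_eq, ih, wt_add_cast]
    have : -S.pair (𝒬.wt x) i + (S.pair (𝒬.wt x) i + S.pair (freeWt 𝒬 w) i)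
        = S.pair (freeWt 𝒬 w) i := by ring
    rw [this]

theorem freeEps_append (h : 𝒬.IsSeminormal) (i : ι) (a b : List Q) :
    freeEps 𝒬 i (a ++ b) =
      max (freeEps 𝒬 i a) (freeEps 𝒬 i b + ((-(S.pair (freeWt 𝒬 a) i) : ℤ) : WithTop ℤ)) := by
  induction a with
  | nil =>
    show freeEps 𝒬 i b = max 0 (freeEps 𝒬 i b + _)
    rw [show freeWt 𝒬 [] = 0 from rfl, S.pair_zero']
    simp [max_eq_right (freeEps_nonneg h i b)]
  | cons x a ih =>
    show max (𝒬.ε i x) (freeEps 𝒬 i (a ++ b) + _) = max (max (𝒬.ε i x) _) (freeEps 𝒬 i b + _)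
    rw [ih, wt_max_add, max_assoc, wt_add_cast,
      show freeWt 𝒬 (x :: a) = 𝒬.wt x + freeWt 𝒬 a from rfl, S.pair_add']
    congr 4
    ring

theorem freePhi_append (h : 𝒬.IsSeminormal) (i : ι) (a b : List Q) :
    freePhi 𝒬 i (a ++ b) =
      max (freePhi 𝒬 i a + ((S.pair (freeWt 𝒬 b) i : ℤ) : WithTop ℤ)) (freePhi 𝒬 i b) := by
  induction a with
  | nil =>
    show freePhi 𝒬 i b = max (0 + _) (freePhi 𝒬 i b)
    rw [zero_add, max_eq_right]
    rw [freePhi_eq_eps h i b]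
    calc ((S.pair (freeWt 𝒬 b) i : ℤ) : WithTop ℤ)
        = 0 + ((S.pair (freeWt 𝒬 b) i : ℤ) : WithTop ℤ) := by rw [zero_add]
      _ ≤ _ := add_le_add_left (freeEps_nonneg h i b) _
  | cons x a ih =>
    show max (𝒬.φ i x + _) (freePhi 𝒬 i (a ++ b)) =
      max (max (𝒬.φ i x + _) (freePhi 𝒬 i a) + _) (freePhi 𝒬 i b)
    have hw : freeWt 𝒬 (a.append b) = freeWt 𝒬 a + freeWt 𝒬 b := freeWt_append 𝒬 a b
    rw [ih, wt_max_add, ← max_assoc, hw, S.pair_add', ← wt_add_cast]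

end AuxFree
section AuxFree2

variable {V : Type*} [NormedAddCommGroup V] [InnerProductSpace ℝ V] {ι : Type*}
  {S : QCSetting V ι} {Q : Type*} {𝒬 : QC S Q}

theorem freeE_isSome (h : 𝒬.IsSeminormal) (i : ι) (w : List Q) :
    (freeE 𝒬 i w).isSome ↔ (freeEps 𝒬 i w ≠ ⊤ ∧ 0 < freeEps 𝒬 i w) := by
  induction w with
  | nil => simp [freeE, freeEps]
  | cons x w ih =>
    simp only [freeE, freeEps]
    by_cases hc : freeEps 𝒬 i w ≤ 𝒬.φ i x
    · rw [if_pos hc]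
      have hle : freeEps 𝒬 i w + ((-(S.pair (𝒬.wt x) i) : ℤ) : WithTop ℤ) ≤ 𝒬.ε i x := by
        rw [wt_sub_le_iff, ← h.phi_eq]
        exact hc
      rw [max_eq_left hle, Option.isSome_map]
      exact q_e_isSome h i x
    · rw [if_neg hc]
      have hlt : 𝒬.φ i x < freeEps 𝒬 i w := not_le.1 hc
      have hεx : 𝒬.ε i x < freeEps 𝒬 i w + ((-(S.pair (𝒬.wt x) i) : ℤ) : WithTop ℤ) := by
        rw [wt_lt_sub_iff, ← h.phi_eq]
        exact hlt
      rw [max_eq_right (le_of_lt hεx), Option.isSome_map, ih]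
      constructor
      · rintro ⟨ht, -⟩
        exact ⟨by rwa [Ne, wt_add_eq_top], lt_of_le_of_lt (q_eps_nonneg h i x) hεx⟩
      · rintro ⟨ht, -⟩
        exact ⟨by rwa [Ne, wt_add_eq_top] at ht, lt_of_le_of_lt (q_phi_nonneg h i x) hlt⟩

theorem freeF_isSome (h : 𝒬.IsSeminormal) (i : ι) (w : List Q) :
    (freeF 𝒬 i w).isSome ↔ (freeEps 𝒬 i w ≠ ⊤ ∧ 0 < freePhi 𝒬 i w) := by
  induction w with
  | nil => simp [freeF, freeEps, freePhi]
  | cons x w ih =>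
    simp only [freeF, freeEps, freePhi]
    by_cases hc : freeEps 𝒬 i w < 𝒬.φ i x
    · rw [if_pos hc, Option.isSome_map, q_f_isSome h i x]
      have h0φ : 0 < 𝒬.φ i x := lt_of_le_of_lt (freeEps_nonneg h i w) hc
      have hle : freeEps 𝒬 i w + ((-(S.pair (𝒬.wt x) i) : ℤ) : WithTop ℤ) ≤ 𝒬.ε i x := by
        rw [wt_sub_le_iff, ← h.phi_eq]
        exact le_of_lt hc
      rw [max_eq_left hle]
      have h0Φ : 0 < max (𝒬.φ i x + ((S.pair (freeWt 𝒬 w) i : ℤ) : WithTop ℤ))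
          (freePhi 𝒬 i w) := by
        have h1 : freePhi 𝒬 i w < 𝒬.φ i x + ((S.pair (freeWt 𝒬 w) i : ℤ) : WithTop ℤ) := by
          rw [freePhi_eq_eps h i w]
          exact (wt_add_lt_iff _ _ _).mpr hc
        exact lt_of_le_of_lt (freePhi_nonneg h i w) (lt_of_lt_of_le h1 (le_max_left _ _))
      exact ⟨fun ⟨ht, _⟩ => ⟨ht, h0Φ⟩, fun ⟨ht, _⟩ => ⟨ht, h0φ⟩⟩
    · rw [if_neg hc, Option.isSome_map, ih]
      have hle : 𝒬.φ i x ≤ freeEps 𝒬 i w := not_lt.1 hc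
      have h1 : 𝒬.ε i x ≤ freeEps 𝒬 i w + ((-(S.pair (𝒬.wt x) i) : ℤ) : WithTop ℤ) := by
        rw [wt_le_sub_iff, ← h.phi_eq]
        exact hle
      have h2 : 𝒬.φ i x + ((S.pair (freeWt 𝒬 w) i : ℤ) : WithTop ℤ) ≤ freePhi 𝒬 i w := by
        rw [freePhi_eq_eps h i w]
        exact (wt_add_le_iff _ _ _).mpr hle
      rw [max_eq_right h1, max_eq_right h2, Ne, Ne, wt_add_eq_top]

theorem freeE_none_of_eps_zero (h : 𝒬.IsSeminormal) (i : ι) {w : List Q}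
    (hw : freeEps 𝒬 i w = 0) : freeE 𝒬 i w = none := by
  cases hE : freeE 𝒬 i w with
  | none => rfl
  | some t =>
    have h2 := (freeE_isSome h i w).1 (by rw [hE]; rfl)
    rw [hw] at h2
    exact absurd h2.2 (lt_irrefl 0)

theorem freeF_none_of_phi_zero (h : 𝒬.IsSeminormal) (i : ι) {w : List Q}
    (hw : freePhi 𝒬 i w = 0) : freeF 𝒬 i w = none := by
  cases hE : freeF 𝒬 i w with
  | none => rfl
  | some t =>
    have h2 := (freeF_isSome h i w).1 (by rw [hE]; rfl)
    rw [hw] at h2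
    exact absurd h2.2 (lt_irrefl 0)

theorem freeE_append (h : 𝒬.IsSeminormal) (i : ι) (a b : List Q) :
    freeE 𝒬 i (a ++ b) = if freeEps 𝒬 i b ≤ freePhi 𝒬 i a
      then (freeE 𝒬 i a).map (· ++ b) else (freeE 𝒬 i b).map (a ++ ·) := by
  induction a with
  | nil =>
    rw [List.nil_append]; simp only [freeE]; rw [show freePhi 𝒬 i [] = 0 from rfl]
    by_cases hb : freeEps 𝒬 i b ≤ (0 : WithTop ℤ)
    · rw [if_pos hb, freeE_none_of_eps_zero h i (le_antisymm hb (freeEps_nonneg h i b))]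
      rfl
    · rw [if_neg hb]
      cases freeE 𝒬 i b <;> simp
  | cons x a ih =>
    simp only [List.cons_append, freeE]; rw [show freePhi 𝒬 i (x :: a) = max (𝒬.φ i x + ((S.pair (freeWt 𝒬 a) i : ℤ) : WithTop ℤ)) (freePhi 𝒬 i a) from rfl]
    rw [freeEps_append h i a b, ih]
    by_cases hI : freeEps 𝒬 i b ≤ freePhi 𝒬 i a
    · have hBA : freeEps 𝒬 i b + ((-(S.pair (freeWt 𝒬 a) i) : ℤ) : WithTop ℤ)
          ≤ freeEps 𝒬 i a := by
        rw [wt_sub_le_iff, ← freePhi_eq_eps h i a]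
        exact hI
      have hc2 : freeEps 𝒬 i b ≤ max (𝒬.φ i x + ((S.pair (freeWt 𝒬 a) i : ℤ) : WithTop ℤ))
          (freePhi 𝒬 i a) := le_trans hI (le_max_right _ _)
      rw [if_pos hI, if_pos hc2]
      by_cases h1 : freeEps 𝒬 i a ≤ 𝒬.φ i x
      · rw [if_pos (max_le h1 (le_trans hBA h1)), if_pos h1]
        cases 𝒬.e i x <;> rfl
      · rw [if_neg (fun hh => h1 (le_trans (le_max_left _ _) hh)), if_neg h1]
        cases freeE 𝒬 i a <;> rfl
    · have hAB : freeEps 𝒬 i a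
          < freeEps 𝒬 i b + ((-(S.pair (freeWt 𝒬 a) i) : ℤ) : WithTop ℤ) := by
        rw [wt_lt_sub_iff, ← freePhi_eq_eps h i a]
        exact not_le.1 hI
      rw [if_neg hI]
      by_cases h2 : freeEps 𝒬 i b + ((-(S.pair (freeWt 𝒬 a) i) : ℤ) : WithTop ℤ) ≤ 𝒬.φ i x
      · have hc2 : freeEps 𝒬 i b ≤ max (𝒬.φ i x + ((S.pair (freeWt 𝒬 a) i : ℤ) : WithTop ℤ))
            (freePhi 𝒬 i a) :=
          le_trans ((wt_sub_le_iff _ _ _).1 h2) (le_max_left _ _)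
        rw [if_pos (max_le (le_of_lt (lt_of_lt_of_le hAB h2)) h2), if_pos hc2,
          if_pos (le_of_lt (lt_of_lt_of_le hAB h2))]
        cases 𝒬.e i x <;> rfl
      · have hgt1 : 𝒬.φ i x + ((S.pair (freeWt 𝒬 a) i : ℤ) : WithTop ℤ) < freeEps 𝒬 i b :=
          not_le.1 (fun hh => h2 ((wt_sub_le_iff _ _ _).2 hh))
        have hgt2 : freePhi 𝒬 i a < freeEps 𝒬 i b := not_le.1 hI
        rw [if_neg (fun hh => h2 (le_trans (le_max_right _ _) hh)),
          if_neg (not_le.2 (max_lt hgt1 hgt2))]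
        cases freeE 𝒬 i b <;> rfl

theorem freeF_append (h : 𝒬.IsSeminormal) (i : ι) (a b : List Q) :
    freeF 𝒬 i (a ++ b) = if freeEps 𝒬 i b < freePhi 𝒬 i a
      then (freeF 𝒬 i a).map (· ++ b) else (freeF 𝒬 i b).map (a ++ ·) := by
  induction a with
  | nil =>
    rw [List.nil_append]; simp only [freeF]; rw [show freePhi 𝒬 i [] = 0 from rfl]
    rw [if_neg (not_lt.2 (freeEps_nonneg h i b))]
    cases freeF 𝒬 i b <;> simp
  | cons x a ih =>
    simp only [List.cons_append, freeF]; rw [show freePhi 𝒬 i (x :: a) = max (𝒬.φ i x + ((S.pair (freeWt 𝒬 a) i : ℤ) : WithTop ℤ)) (freePhi 𝒬 i a) from rfl]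
    rw [freeEps_append h i a b, ih]
    by_cases hI : freeEps 𝒬 i b < freePhi 𝒬 i a
    · have hBA : freeEps 𝒬 i b + ((-(S.pair (freeWt 𝒬 a) i) : ℤ) : WithTop ℤ)
          < freeEps 𝒬 i a := by
        rw [wt_sub_lt_iff, ← freePhi_eq_eps h i a]
        exact hI
      have hc2 : freeEps 𝒬 i b < max (𝒬.φ i x + ((S.pair (freeWt 𝒬 a) i : ℤ) : WithTop ℤ))
          (freePhi 𝒬 i a) := lt_of_lt_of_le hI (le_max_right _ _)
      rw [if_pos hI, if_pos hc2]
      by_cases h1 : freeEps 𝒬 i a < 𝒬.φ i x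
      · rw [if_pos (max_lt h1 (lt_trans hBA h1)), if_pos h1]
        cases 𝒬.f i x <;> rfl
      · rw [if_neg (fun hh => h1 (lt_of_le_of_lt (le_max_left _ _) hh)), if_neg h1]
        cases freeF 𝒬 i a <;> rfl
    · have hAB : freeEps 𝒬 i a
          ≤ freeEps 𝒬 i b + ((-(S.pair (freeWt 𝒬 a) i) : ℤ) : WithTop ℤ) := by
        rw [wt_le_sub_iff, ← freePhi_eq_eps h i a]
        exact not_lt.1 hI
      rw [if_neg hI]
      by_cases h2 : freeEps 𝒬 i b + ((-(S.pair (freeWt 𝒬 a) i) : ℤ) : WithTop ℤ) < 𝒬.φ i x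
      · have hc2 : freeEps 𝒬 i b < max (𝒬.φ i x + ((S.pair (freeWt 𝒬 a) i : ℤ) : WithTop ℤ))
            (freePhi 𝒬 i a) :=
          lt_of_lt_of_le ((wt_sub_lt_iff _ _ _).1 h2) (le_max_left _ _)
        rw [if_pos (max_lt (lt_of_le_of_lt hAB h2) h2), if_pos hc2,
          if_pos (lt_of_le_of_lt hAB h2)]
        cases 𝒬.f i x <;> rfl
      · have hge1 : 𝒬.φ i x + ((S.pair (freeWt 𝒬 a) i : ℤ) : WithTop ℤ) ≤ freeEps 𝒬 i b :=
          not_lt.1 (fun hh => h2 ((wt_sub_lt_iff _ _ _).2 hh))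
        have hge2 : freePhi 𝒬 i a ≤ freeEps 𝒬 i b := not_lt.1 hI
        rw [if_neg (fun hh => h2 (lt_of_le_of_lt (le_max_right _ _) hh)),
          if_neg (not_lt.2 (max_le hge1 hge2))]
        cases freeF 𝒬 i b <;> rfl

end AuxFree2
section AuxFree3

variable {V : Type*} [NormedAddCommGroup V] [InnerProductSpace ℝ V] {ι : Type*}
  {S : QCSetting V ι} {Q : Type*} {𝒬 : QC S Q}

theorem wt_one_cast : (1 : WithTop ℤ) = ((1 : ℤ) : WithTop ℤ) := rfl

theorem wt_coe_mono {c d : ℤ} (hcd : c ≤ d) (a : WithTop ℤ) :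
    a + (c : WithTop ℤ) ≤ a + (d : WithTop ℤ) :=
  add_le_add_right (WithTop.coe_le_coe.2 hcd) a

theorem free_wt_e (h : 𝒬.IsSeminormal) (i : ι) :
    ∀ {w w' : List Q}, freeE 𝒬 i w = some w' →
      (freeWt 𝒬 w' : V) = (freeWt 𝒬 w : V) + S.simple i := by
  intro w
  induction w with
  | nil => intro w' hE; simp [freeE] at hE
  | cons x t ih =>
    intro w' hE
    simp only [freeE] at hE
    split_ifs at hE with hc
    · obtain ⟨y, hy, rfl⟩ := Option.map_eq_some_iff.1 hE
      show ((𝒬.wt y + freeWt 𝒬 t : S.Λ) : V) = ((𝒬.wt x + freeWt 𝒬 t : S.Λ) : V) + S.simple i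
      push_cast
      rw [h.wt_e i x y hy]
      abel
    · obtain ⟨t', ht', rfl⟩ := Option.map_eq_some_iff.1 hE
      show ((𝒬.wt x + freeWt 𝒬 t' : S.Λ) : V) = ((𝒬.wt x + freeWt 𝒬 t : S.Λ) : V) + S.simple i
      push_cast
      rw [ih ht']
      abel

theorem free_wt_f (h : 𝒬.IsSeminormal) (i : ι) :
    ∀ {w w' : List Q}, freeF 𝒬 i w = some w' →
      (freeWt 𝒬 w' : V) = (freeWt 𝒬 w : V) - S.simple i := by
  intro w
  induction w with
  | nil => intro w' hE; simp [freeF] at hE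
  | cons x t ih =>
    intro w' hE
    simp only [freeF] at hE
    split_ifs at hE with hc
    · obtain ⟨y, hy, rfl⟩ := Option.map_eq_some_iff.1 hE
      show ((𝒬.wt y + freeWt 𝒬 t : S.Λ) : V) = ((𝒬.wt x + freeWt 𝒬 t : S.Λ) : V) - S.simple i
      push_cast
      rw [h.wt_f i x y hy]
      abel
    · obtain ⟨t', ht', rfl⟩ := Option.map_eq_some_iff.1 hE
      show ((𝒬.wt x + freeWt 𝒬 t' : S.Λ) : V) = ((𝒬.wt x + freeWt 𝒬 t : S.Λ) : V) - S.simple i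
      push_cast
      rw [ih ht']
      abel

theorem free_eps_e (h : 𝒬.IsSeminormal) (i : ι) :
    ∀ {w w' : List Q}, freeE 𝒬 i w = some w' →
      freeEps 𝒬 i w = freeEps 𝒬 i w' + 1 := by
  intro w
  induction w with
  | nil => intro w' hE; simp [freeE] at hE
  | cons x t ih =>
    intro w' hE
    simp only [freeE] at hE
    split_ifs at hE with hc
    · obtain ⟨y, hy, rfl⟩ := Option.map_eq_some_iff.1 hE
      have hεy : 𝒬.ε i x = 𝒬.ε i y + 1 := q_eps_e h hy
      have hpy : S.pair (𝒬.wt y) i = S.pair (𝒬.wt x) i + 2 :=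
        S.pair_shift_e (h.wt_e i x y hy)
      show max (𝒬.ε i x) (freeEps 𝒬 i t + _) = max (𝒬.ε i y) (freeEps 𝒬 i t + _) + 1
      have h1 : freeEps 𝒬 i t + ((-(S.pair (𝒬.wt x) i) : ℤ) : WithTop ℤ) ≤ 𝒬.ε i x := by
        rw [wt_sub_le_iff, ← h.phi_eq]
        exact hc
      have h2 : freeEps 𝒬 i t + ((-(S.pair (𝒬.wt y) i) : ℤ) : WithTop ℤ) ≤ 𝒬.ε i y := by
        rw [wt_sub_le_iff, hpy]
        calc freeEps 𝒬 i t ≤ 𝒬.φ i x := hc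
          _ = 𝒬.ε i x + ((S.pair (𝒬.wt x) i : ℤ) : WithTop ℤ) := h.phi_eq i x
          _ = 𝒬.ε i y + 1 + ((S.pair (𝒬.wt x) i : ℤ) : WithTop ℤ) := by rw [hεy]
          _ = 𝒬.ε i y + ((1 + S.pair (𝒬.wt x) i : ℤ) : WithTop ℤ) := by
            rw [wt_one_cast, wt_add_cast]
          _ ≤ 𝒬.ε i y + ((S.pair (𝒬.wt x) i + 2 : ℤ) : WithTop ℤ) :=
            wt_coe_mono (by omega) _
      rw [max_eq_left h1, max_eq_left h2, hεy]
    · obtain ⟨t', ht', rfl⟩ := Option.map_eq_some_iff.1 hE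
      have hIH := ih ht'
      show max (𝒬.ε i x) (freeEps 𝒬 i t + _) = max (𝒬.ε i x) (freeEps 𝒬 i t' + _) + 1
      have hlt : 𝒬.φ i x < freeEps 𝒬 i t := not_le.1 hc
      have hne : 𝒬.φ i x ≠ ⊤ := ne_top_of_lt hlt
      have hφE : 𝒬.φ i x ≤ freeEps 𝒬 i t' := by
        have h1 := (wt_lt_iff_add_one_le hne).1 hlt
        rw [hIH] at h1
        rw [wt_one_cast] at h1
        exact (wt_add_le_iff _ _ _).1 h1
      have h2' : 𝒬.ε i x ≤ freeEps 𝒬 i t' + ((-(S.pair (𝒬.wt x) i) : ℤ) : WithTop ℤ) := by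
        rw [wt_le_sub_iff, ← h.phi_eq]
        exact hφE
      have h1' : 𝒬.ε i x ≤ freeEps 𝒬 i t + ((-(S.pair (𝒬.wt x) i) : ℤ) : WithTop ℤ) := by
        rw [wt_le_sub_iff, ← h.phi_eq]
        exact le_of_lt hlt
      rw [max_eq_right h1', max_eq_right h2', hIH, add_right_comm]

theorem free_eps_f (h : 𝒬.IsSeminormal) (i : ι) :
    ∀ {w w' : List Q}, freeF 𝒬 i w = some w' →
      freeEps 𝒬 i w' = freeEps 𝒬 i w + 1 := by
  intro w
  induction w with
  | nil => intro w' hE; simp [freeF] at hE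
  | cons x t ih =>
    intro w' hE
    simp only [freeF] at hE
    split_ifs at hE with hc
    · obtain ⟨y, hy, rfl⟩ := Option.map_eq_some_iff.1 hE
      have hεy : 𝒬.ε i y = 𝒬.ε i x + 1 := q_eps_f h hy
      have hpy : S.pair (𝒬.wt y) i = S.pair (𝒬.wt x) i - 2 :=
        S.pair_shift_f (h.wt_f i x y hy)
      show max (𝒬.ε i y) (freeEps 𝒬 i t + _) = max (𝒬.ε i x) (freeEps 𝒬 i t + _) + 1
      have hEne : freeEps 𝒬 i t ≠ ⊤ := ne_top_of_lt hc
      have hstep : freeEps 𝒬 i t + (1 : WithTop ℤ) ≤ 𝒬.φ i x :=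
        (wt_lt_iff_add_one_le hEne).1 hc
      have h2 : freeEps 𝒬 i t + ((-(S.pair (𝒬.wt y) i) : ℤ) : WithTop ℤ) ≤ 𝒬.ε i y := by
        rw [wt_sub_le_iff, hpy, hεy]
        have : 𝒬.ε i x + 1 + ((S.pair (𝒬.wt x) i - 2 : ℤ) : WithTop ℤ)
            = 𝒬.ε i x + ((S.pair (𝒬.wt x) i - 1 : ℤ) : WithTop ℤ) := by
          rw [wt_one_cast, wt_add_cast]
          congr 2
          omega
        rw [this]
        have h3 : freeEps 𝒬 i t + ((1 : ℤ) : WithTop ℤ)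
            ≤ 𝒬.ε i x + ((S.pair (𝒬.wt x) i - 1 : ℤ) : WithTop ℤ) + ((1 : ℤ) : WithTop ℤ) := by
          rw [wt_add_cast (𝒬.ε i x)]
          have : (S.pair (𝒬.wt x) i - 1 + 1 : ℤ) = S.pair (𝒬.wt x) i := by omega
          rw [this, ← h.phi_eq]
          rw [wt_one_cast] at hstep
          exact hstep
        exact (wt_add_le_iff _ _ _).1 h3
      have h1 : freeEps 𝒬 i t + ((-(S.pair (𝒬.wt x) i) : ℤ) : WithTop ℤ) ≤ 𝒬.ε i x := by
        rw [wt_sub_le_iff, ← h.phi_eq]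
        exact le_of_lt hc
      rw [max_eq_left h2, max_eq_left h1, hεy]
    · obtain ⟨t', ht', rfl⟩ := Option.map_eq_some_iff.1 hE
      have hIH := ih ht'
      show max (𝒬.ε i x) (freeEps 𝒬 i t' + _) = max (𝒬.ε i x) (freeEps 𝒬 i t + _) + 1
      have hle : 𝒬.φ i x ≤ freeEps 𝒬 i t := not_lt.1 hc
      have h1 : 𝒬.ε i x ≤ freeEps 𝒬 i t + ((-(S.pair (𝒬.wt x) i) : ℤ) : WithTop ℤ) := by
        rw [wt_le_sub_iff, ← h.phi_eq]
        exact hle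
      have h2 : 𝒬.ε i x ≤ freeEps 𝒬 i t' + ((-(S.pair (𝒬.wt x) i) : ℤ) : WithTop ℤ) := by
        rw [hIH, add_right_comm]
        exact le_trans h1 (le_add_of_nonneg_right zero_le_one)
      rw [max_eq_right h1, max_eq_right h2, hIH, add_right_comm]

theorem freeG1 (h : 𝒬.IsSeminormal) (i : ι) :
    ∀ {w w' : List Q}, freeE 𝒬 i w = some w' → freeF 𝒬 i w' = some w := by
  intro w
  induction w with
  | nil => intro w' hE; simp [freeE] at hE
  | cons x t ih =>
    intro w' hE
    simp only [freeE] at hE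
    split_ifs at hE with hc
    · obtain ⟨y, hy, rfl⟩ := Option.map_eq_some_iff.1 hE
      have hφ : 𝒬.φ i y = 𝒬.φ i x + 1 := q_phi_e h hy
      have hφx_ne : 𝒬.φ i x ≠ ⊤ := q_phi_ne_top h (q_ne_top_of_e h hy).1
      show (if freeEps 𝒬 i t < 𝒬.φ i y then _ else _) = _
      rw [if_pos (by rw [hφ]; exact lt_of_le_of_lt hc (wt_lt_add_one hφx_ne)),
        (h.e_iff_f i x y).1 hy]
      rfl
    · obtain ⟨t', ht', rfl⟩ := Option.map_eq_some_iff.1 hE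
      have hIH := ih ht'
      have hlt : 𝒬.φ i x < freeEps 𝒬 i t := not_le.1 hc
      have hne : 𝒬.φ i x ≠ ⊤ := ne_top_of_lt hlt
      have hφE : 𝒬.φ i x ≤ freeEps 𝒬 i t' := by
        have h1 := (wt_lt_iff_add_one_le hne).1 hlt
        rw [free_eps_e h i ht', wt_one_cast] at h1
        exact (wt_add_le_iff _ _ _).1 h1
      show (if freeEps 𝒬 i t' < 𝒬.φ i x then _ else _) = _
      rw [if_neg (not_lt.2 hφE), hIH]
      rfl

theorem freeG2 (h : 𝒬.IsSeminormal) (i : ι) :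
    ∀ {w w' : List Q}, freeF 𝒬 i w = some w' → freeE 𝒬 i w' = some w := by
  intro w
  induction w with
  | nil => intro w' hE; simp [freeF] at hE
  | cons x t ih =>
    intro w' hE
    simp only [freeF] at hE
    split_ifs at hE with hc
    · obtain ⟨y, hy, rfl⟩ := Option.map_eq_some_iff.1 hE
      have hφ : 𝒬.φ i x = 𝒬.φ i y + 1 := q_phi_f h hy
      have hEne : freeEps 𝒬 i t ≠ ⊤ := ne_top_of_lt hc
      have hle : freeEps 𝒬 i t ≤ 𝒬.φ i y := by
        have h1 := (wt_lt_iff_add_one_le hEne).1 hc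
        rw [hφ, wt_one_cast] at h1
        exact (wt_add_le_iff _ _ _).1 h1
      show (if freeEps 𝒬 i t ≤ 𝒬.φ i y then _ else _) = _
      rw [if_pos hle, (h.e_iff_f i y x).2 hy]
      rfl
    · obtain ⟨t', ht', rfl⟩ := Option.map_eq_some_iff.1 hE
      have hIH := ih ht'
      have hle : 𝒬.φ i x ≤ freeEps 𝒬 i t := not_lt.1 hc
      have hEt_ne : freeEps 𝒬 i t ≠ ⊤ :=
        ((freeF_isSome h i t).1 (by rw [ht']; rfl)).1
      have hlt : 𝒬.φ i x < freeEps 𝒬 i t' := by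
        rw [free_eps_f h i ht']
        exact lt_of_le_of_lt hle (wt_lt_add_one hEt_ne)
      show (if freeEps 𝒬 i t' ≤ 𝒬.φ i x then _ else _) = _
      rw [if_neg (not_le.2 hlt), hIH]
      rfl

theorem free_len_e (i : ι) :
    ∀ {w w' : List Q}, freeE 𝒬 i w = some w' → w'.length = w.length := by
  intro w
  induction w with
  | nil => intro w' hE; simp [freeE] at hE
  | cons x t ih =>
    intro w' hE
    simp only [freeE] at hE
    split_ifs at hE with hc
    · obtain ⟨y, hy, rfl⟩ := Option.map_eq_some_iff.1 hE
      rfl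
    · obtain ⟨t', ht', rfl⟩ := Option.map_eq_some_iff.1 hE
      simp [ih ht']

theorem free_len_f (i : ι) :
    ∀ {w w' : List Q}, freeF 𝒬 i w = some w' → w'.length = w.length := by
  intro w
  induction w with
  | nil => intro w' hE; simp [freeF] at hE
  | cons x t ih =>
    intro w' hE
    simp only [freeF] at hE
    split_ifs at hE with hc
    · obtain ⟨y, hy, rfl⟩ := Option.map_eq_some_iff.1 hE
      rfl
    · obtain ⟨t', ht', rfl⟩ := Option.map_eq_some_iff.1 hE
      simp [ih ht']

end AuxFree3
section AuxBridge

variable {V : Type*} [NormedAddCommGroup V] [InnerProductSpace ℝ V] {ι : Type*}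
  {S : QCSetting V ι} {Q : Type*} {𝒬 : QC S Q}

theorem FT_e_some_iff {i : ι} {w w' : FreeMonoid Q} :
    (freeTensorQC 𝒬).e i w = some w' ↔
      freeE 𝒬 i (FreeMonoid.toList w) = some (FreeMonoid.toList w') := by
  show (freeE 𝒬 i (FreeMonoid.toList w)).map (fun l => FreeMonoid.ofList l) = some w' ↔ _
  constructor
  · intro hh
    obtain ⟨l, hl, rfl⟩ := Option.map_eq_some_iff.1 hh
    exact hl
  · intro hh
    rw [hh]
    rfl

theorem FT_f_some_iff {i : ι} {w w' : FreeMonoid Q} :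
    (freeTensorQC 𝒬).f i w = some w' ↔
      freeF 𝒬 i (FreeMonoid.toList w) = some (FreeMonoid.toList w') := by
  show (freeF 𝒬 i (FreeMonoid.toList w)).map (fun l => FreeMonoid.ofList l) = some w' ↔ _
  constructor
  · intro hh
    obtain ⟨l, hl, rfl⟩ := Option.map_eq_some_iff.1 hh
    exact hl
  · intro hh
    rw [hh]
    rfl

theorem FT_e_isSome_iff {i : ι} {w : FreeMonoid Q} :
    ((freeTensorQC 𝒬).e i w).isSome ↔ (freeE 𝒬 i (FreeMonoid.toList w)).isSome := by
  show ((freeE 𝒬 i (FreeMonoid.toList w)).map (fun l => FreeMonoid.ofList l)).isSome ↔ _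
  rw [Option.isSome_map]

theorem FT_f_isSome_iff {i : ι} {w : FreeMonoid Q} :
    ((freeTensorQC 𝒬).f i w).isSome ↔ (freeF 𝒬 i (FreeMonoid.toList w)).isSome := by
  show ((freeF 𝒬 i (FreeMonoid.toList w)).map (fun l => FreeMonoid.ofList l)).isSome ↔ _
  rw [Option.isSome_map]

/-- Induction principle for connectivity: a property invariant along edges. -/
theorem conn_ind {P : FreeMonoid Q → Prop}
    (hP : ∀ w w', (∃ i, (freeTensorQC 𝒬).f i w = some w' ∨ (freeTensorQC 𝒬).f i w' = some w ∨
      (freeTensorQC 𝒬).e i w = some w' ∨ (freeTensorQC 𝒬).e i w' = some w) → (P w ↔ P w'))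
    {x y : FreeMonoid Q} (hconn : (freeTensorQC 𝒬).conn x y) : P x ↔ P y := by
  unfold QC.conn at hconn
  induction hconn with
  | rel a b hab => exact hP a b hab
  | refl a => exact Iff.rfl
  | symm a b hab ih => exact ih.symm
  | trans a b c hab hbc ih1 ih2 => exact ih1.trans ih2

theorem conn_length {x y : FreeMonoid Q} (hconn : (freeTensorQC 𝒬).conn x y) :
    (FreeMonoid.toList y).length = (FreeMonoid.toList x).length := by
  have := conn_ind (P := fun z => (FreeMonoid.toList z).length = (FreeMonoid.toList x).length)
    ?_ hconn
  · exact this.1 rfl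
  · rintro w w' ⟨i, hcase⟩
    have hl : (FreeMonoid.toList w').length = (FreeMonoid.toList w).length := by
      rcases hcase with hh | hh | hh | hh
      · exact free_len_f i (FT_f_some_iff.1 hh)
      · exact (free_len_f i (FT_f_some_iff.1 hh)).symm
      · exact free_len_e i (FT_e_some_iff.1 hh)
      · exact (free_len_e i (FT_e_some_iff.1 hh)).symm
    show (FreeMonoid.toList w).length = (FreeMonoid.toList x).length ↔
      (FreeMonoid.toList w').length = (FreeMonoid.toList x).length
    rw [hl]

theorem pmap_subtype_eq_some_iff {α : Type*} {p : α → Prop} {o : Option α}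
    {H : ∀ a ∈ o, p a} {z : Subtype p} :
    (o.pmap (fun a h => (⟨a, h⟩ : Subtype p)) H) = some z ↔ o = some z.1 := by
  cases o with
  | none => simp [Option.pmap]
  | some a =>
    simp only [Option.pmap]
    constructor
    · intro hh
      obtain rfl := Option.some.inj hh
      rfl
    · intro hh
      exact congrArg some (Subtype.ext (Option.some.inj hh))

theorem comp_e_some_iff {x : FreeMonoid Q} {i : ι} {y z : {y // (freeTensorQC 𝒬).conn x y}} :
    ((freeTensorQC 𝒬).compQC x).e i y = some z ↔ (freeTensorQC 𝒬).e i y.1 = some z.1 :=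
  pmap_subtype_eq_some_iff

theorem comp_f_some_iff {x : FreeMonoid Q} {i : ι} {y z : {y // (freeTensorQC 𝒬).conn x y}} :
    ((freeTensorQC 𝒬).compQC x).f i y = some z ↔ (freeTensorQC 𝒬).f i y.1 = some z.1 :=
  pmap_subtype_eq_some_iff

theorem comp_e_total {x : FreeMonoid Q} {i : ι} {y : {y // (freeTensorQC 𝒬).conn x y}}
    {a : FreeMonoid Q} (hE : (freeTensorQC 𝒬).e i y.1 = some a) :
    ∃ hz : (freeTensorQC 𝒬).conn x a,
      ((freeTensorQC 𝒬).compQC x).e i y = some ⟨a, hz⟩ := by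
  refine ⟨Relation.EqvGen.trans _ _ _ y.2
    (Relation.EqvGen.rel _ _ ⟨i, Or.inr (Or.inr (Or.inl hE))⟩), ?_⟩
  exact comp_e_some_iff.2 hE

theorem comp_f_total {x : FreeMonoid Q} {i : ι} {y : {y // (freeTensorQC 𝒬).conn x y}}
    {a : FreeMonoid Q} (hF : (freeTensorQC 𝒬).f i y.1 = some a) :
    ∃ hz : (freeTensorQC 𝒬).conn x a,
      ((freeTensorQC 𝒬).compQC x).f i y = some ⟨a, hz⟩ := by
  refine ⟨Relation.EqvGen.trans _ _ _ y.2
    (Relation.EqvGen.rel _ _ ⟨i, Or.inl hF⟩), ?_⟩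
  exact comp_f_some_iff.2 hF

end AuxBridge

section AuxHom

variable {V : Type*} [NormedAddCommGroup V] [InnerProductSpace ℝ V] {ι : Type*}
  {S : QCSetting V ι} {A B : Type*} {𝒜 : QC S A} {ℬ : QC S B}

theorem QCHom.some_isSome (ψ : QCHom 𝒜 ℬ) (hinj : Function.Injective ψ.toFun) (a : A) :
    (ψ.toFun (some a)).isSome := by
  cases hh : ψ.toFun (some a) with
  | none => exact absurd (hinj (hh.trans ψ.map_none.symm)) (by simp)
  | some b => rfl

/-- The total function underlying an injective quasi-crystal homomorphism. -/
def QCHom.fn (ψ : QCHom 𝒜 ℬ) (hinj : Function.Injective ψ.toFun) (a : A) : B :=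
  (ψ.toFun (some a)).get (ψ.some_isSome hinj a)

theorem QCHom.fn_spec (ψ : QCHom 𝒜 ℬ) (hinj : Function.Injective ψ.toFun) (a : A) :
    ψ.toFun (some a) = some (ψ.fn hinj a) := by
  simp [QCHom.fn]

end AuxHom
section AuxEquiv

variable {V : Type*} [NormedAddCommGroup V] [InnerProductSpace ℝ V] {ι : Type*}
  {S : QCSetting V ι} {Q : Type*} {𝒬 : QC S Q}

theorem plactic_refl (𝒬 : QC S Q) (u : FreeMonoid Q) : placticRel 𝒬 u u := by
  refine ⟨⟨id, rfl, ?_, ?_, ?_, ?_, ?_⟩, Function.bijective_id, rfl⟩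
  · intro x y hxy
    obtain rfl := Option.some.inj hxy
    rfl
  · intro i x y hxy
    obtain rfl := Option.some.inj hxy
    rfl
  · intro i x y hxy
    obtain rfl := Option.some.inj hxy
    rfl
  · intro i x x' y y' he hx hx'
    obtain rfl := Option.some.inj hx
    obtain rfl := Option.some.inj hx'
    exact he
  · intro i x x' y y' he hx hx'
    obtain rfl := Option.some.inj hx
    obtain rfl := Option.some.inj hx'
    exact he

theorem plactic_trans {u v w : FreeMonoid Q} (h1 : placticRel 𝒬 u v)
    (h2 : placticRel 𝒬 v w) : placticRel 𝒬 u w := by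
  obtain ⟨ψ₁, hb₁, hm₁⟩ := h1
  obtain ⟨ψ₂, hb₂, hm₂⟩ := h2
  have key : ∀ x y, (ψ₂.toFun ∘ ψ₁.toFun) (some x) = some y →
      ∃ z, ψ₁.toFun (some x) = some z ∧ ψ₂.toFun (some z) = some y := by
    intro x y hxy
    cases h1 : ψ₁.toFun (some x) with
    | none =>
      exfalso
      have : ψ₂.toFun (ψ₁.toFun (some x)) = some y := hxy
      rw [h1, ψ₂.map_none] at this
      cases this
    | some z =>
      refine ⟨z, rfl, ?_⟩
      have : ψ₂.toFun (ψ₁.toFun (some x)) = some y := hxy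
      rwa [h1] at this
  refine ⟨⟨ψ₂.toFun ∘ ψ₁.toFun, by simp [Function.comp, ψ₁.map_none, ψ₂.map_none], ?_, ?_, ?_,
    ?_, ?_⟩, ?_, ?_⟩
  · intro x y hxy
    obtain ⟨z, hz1, hz2⟩ := key x y hxy
    exact (ψ₂.wt_eq z y hz2).trans (ψ₁.wt_eq x z hz1)
  · intro i x y hxy
    obtain ⟨z, hz1, hz2⟩ := key x y hxy
    exact (ψ₂.eps_eq i z y hz2).trans (ψ₁.eps_eq i x z hz1)
  · intro i x y hxy
    obtain ⟨z, hz1, hz2⟩ := key x y hxy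
    exact (ψ₂.phi_eq i z y hz2).trans (ψ₁.phi_eq i x z hz1)
  · intro i x x' y y' he hx hx'
    obtain ⟨z, hz1, hz2⟩ := key x y hx
    obtain ⟨z', hz1', hz2'⟩ := key x' y' hx'
    exact ψ₂.comm_e i z z' y y' (ψ₁.comm_e i x x' z z' he hz1 hz1') hz2 hz2'
  · intro i x x' y y' he hx hx'
    obtain ⟨z, hz1, hz2⟩ := key x y hx
    obtain ⟨z', hz1', hz2'⟩ := key x' y' hx'
    exact ψ₂.comm_f i z z' y y' (ψ₁.comm_f i x x' z z' he hz1 hz1') hz2 hz2'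
  · exact hb₂.comp hb₁
  · show ψ₂.toFun (ψ₁.toFun (some ⟨u, _⟩)) = _
    rw [hm₁, hm₂]

theorem plactic_inv (h : 𝒬.IsSeminormal) {u v : FreeMonoid Q}
    (ψ : QCHom ((freeTensorQC 𝒬).compQC u) ((freeTensorQC 𝒬).compQC v))
    (hbij : Function.Bijective ψ.toFun)
    (hmap : ψ.toFun (some ⟨u, Relation.EqvGen.refl u⟩) = some ⟨v, Relation.EqvGen.refl v⟩) :
    ∃ τ : QCHom ((freeTensorQC 𝒬).compQC v) ((freeTensorQC 𝒬).compQC u),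
      Function.Bijective τ.toFun ∧
      τ.toFun (some ⟨v, Relation.EqvGen.refl v⟩) = some ⟨u, Relation.EqvGen.refl u⟩ ∧
      (∀ o, ψ.toFun (τ.toFun o) = o) ∧ (∀ o, τ.toFun (ψ.toFun o) = o) := by
  classical
  set E := Equiv.ofBijective ψ.toFun hbij with hEdef
  have hE : ∀ o, E o = ψ.toFun o := fun _ => rfl
  have hkey : ∀ x y, E.symm (some x) = some y → ψ.toFun (some y) = some x := by
    intro x y hxy
    have := (Equiv.symm_apply_eq E).1 hxy
    rw [hE] at this
    exact this.symm
  refine ⟨⟨fun o => E.symm o, ?_, ?_, ?_, ?_, ?_, ?_⟩, E.symm.bijective, ?_, ?_, ?_⟩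
  · refine (Equiv.symm_apply_eq E).2 ?_
    rw [hE, ψ.map_none]
  · intro x y hxy
    exact (ψ.wt_eq y x (hkey x y hxy)).symm
  · intro i x y hxy
    exact (ψ.eps_eq i y x (hkey x y hxy)).symm
  · intro i x y hxy
    exact (ψ.phi_eq i y x (hkey x y hxy)).symm
  · -- comm_e
    intro i x x' y y' he hx hx'
    have hψy := hkey x y hx
    have hψy' := hkey x' y' hx'
    have hinj : Function.Injective ψ.toFun := hbij.1
    have hamb : (freeTensorQC 𝒬).e i x.1 = some x'.1 := comp_e_some_iff.1 he
    have hlist : freeE 𝒬 i (FreeMonoid.toList x.1) = some (FreeMonoid.toList x'.1) :=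
      FT_e_some_iff.1 hamb
    have heps : freeEps 𝒬 i (FreeMonoid.toList x.1) = freeEps 𝒬 i (FreeMonoid.toList y.1) :=
      ψ.eps_eq i y x hψy
    have h1 : (freeE 𝒬 i (FreeMonoid.toList y.1)).isSome := by
      rw [freeE_isSome h i _]
      have h2 := (freeE_isSome h i (FreeMonoid.toList x.1)).1 (by rw [hlist]; rfl)
      rwa [heps] at h2
    obtain ⟨la, hla⟩ := Option.isSome_iff_exists.1 h1
    have hFy : (freeTensorQC 𝒬).e i y.1 = some (FreeMonoid.ofList la) :=
      FT_e_some_iff.2 hla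
    obtain ⟨hz, hcompE⟩ := comp_e_total (y := y) hFy
    have hfn := ψ.fn_spec hinj ⟨FreeMonoid.ofList la, hz⟩
    have hVe := ψ.comm_e i y ⟨FreeMonoid.ofList la, hz⟩ x (ψ.fn hinj ⟨FreeMonoid.ofList la, hz⟩)
      hcompE hψy hfn
    have hx'_eq : x' = ψ.fn hinj ⟨FreeMonoid.ofList la, hz⟩ :=
      Option.some.inj (he.symm.trans hVe)
    have : ψ.toFun (some y') = ψ.toFun (some ⟨FreeMonoid.ofList la, hz⟩) := by
      rw [hψy', hx'_eq, hfn]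
    have hy'_eq : y' = ⟨FreeMonoid.ofList la, hz⟩ := Option.some.inj (hinj this)
    rw [hy'_eq]
    exact hcompE
  · -- comm_f
    intro i x x' y y' he hx hx'
    have hψy := hkey x y hx
    have hψy' := hkey x' y' hx'
    have hinj : Function.Injective ψ.toFun := hbij.1
    have hamb : (freeTensorQC 𝒬).f i x.1 = some x'.1 := comp_f_some_iff.1 he
    have hlist : freeF 𝒬 i (FreeMonoid.toList x.1) = some (FreeMonoid.toList x'.1) :=
      FT_f_some_iff.1 hamb
    have heps : freeEps 𝒬 i (FreeMonoid.toList x.1) = freeEps 𝒬 i (FreeMonoid.toList y.1) :=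
      ψ.eps_eq i y x hψy
    have hphi : freePhi 𝒬 i (FreeMonoid.toList x.1) = freePhi 𝒬 i (FreeMonoid.toList y.1) :=
      ψ.phi_eq i y x hψy
    have h1 : (freeF 𝒬 i (FreeMonoid.toList y.1)).isSome := by
      rw [freeF_isSome h i _]
      have h2 := (freeF_isSome h i (FreeMonoid.toList x.1)).1 (by rw [hlist]; rfl)
      rwa [heps, hphi] at h2
    obtain ⟨la, hla⟩ := Option.isSome_iff_exists.1 h1
    have hFy : (freeTensorQC 𝒬).f i y.1 = some (FreeMonoid.ofList la) :=
      FT_f_some_iff.2 hla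
    obtain ⟨hz, hcompF⟩ := comp_f_total (y := y) hFy
    have hfn := ψ.fn_spec hinj ⟨FreeMonoid.ofList la, hz⟩
    have hVf := ψ.comm_f i y ⟨FreeMonoid.ofList la, hz⟩ x (ψ.fn hinj ⟨FreeMonoid.ofList la, hz⟩)
      hcompF hψy hfn
    have hx'_eq : x' = ψ.fn hinj ⟨FreeMonoid.ofList la, hz⟩ :=
      Option.some.inj (he.symm.trans hVf)
    have : ψ.toFun (some y') = ψ.toFun (some ⟨FreeMonoid.ofList la, hz⟩) := by
      rw [hψy', hx'_eq, hfn]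
    have hy'_eq : y' = ⟨FreeMonoid.ofList la, hz⟩ := Option.some.inj (hinj this)
    rw [hy'_eq]
    exact hcompF
  · refine (Equiv.symm_apply_eq E).2 ?_
    rw [hE, hmap]
  · intro o
    show ψ.toFun (E.symm o) = o
    rw [← hE]
    exact E.apply_symm_apply o
  · intro o
    show E.symm (ψ.toFun o) = o
    rw [← hE]
    exact E.symm_apply_apply o

theorem plactic_symm (h : 𝒬.IsSeminormal) {u v : FreeMonoid Q}
    (huv : placticRel 𝒬 u v) : placticRel 𝒬 v u := by
  obtain ⟨ψ, hb, hm⟩ := huv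
  obtain ⟨τ, hτb, hτm, -, -⟩ := plactic_inv h ψ hb hm
  exact ⟨τ, hτb, hτm⟩

end AuxEquiv
section AuxMul

variable {V : Type*} [NormedAddCommGroup V] [InnerProductSpace ℝ V] {ι : Type*}
  {S : QCSetting V ι} {Q : Type*} {𝒬 : QC S Q} {u v u' v' : FreeMonoid Q}

/-- The invariant carried around the connected component of `u * u'`. -/
abbrev MulP (ψ : QCHom ((freeTensorQC 𝒬).compQC u) ((freeTensorQC 𝒬).compQC v))
    (ψ' : QCHom ((freeTensorQC 𝒬).compQC u') ((freeTensorQC 𝒬).compQC v'))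
    (hinj : Function.Injective ψ.toFun) (hinj' : Function.Injective ψ'.toFun)
    (w : FreeMonoid Q) : Prop :=
  ∃ (a b : FreeMonoid Q) (ha : (freeTensorQC 𝒬).conn u a) (hb : (freeTensorQC 𝒬).conn u' b),
    w = a * b ∧ (freeTensorQC 𝒬).conn (v * v')
      ((ψ.fn hinj ⟨a, ha⟩).1 * (ψ'.fn hinj' ⟨b, hb⟩).1)

variable (ψ : QCHom ((freeTensorQC 𝒬).compQC u) ((freeTensorQC 𝒬).compQC v))
  (ψ' : QCHom ((freeTensorQC 𝒬).compQC u') ((freeTensorQC 𝒬).compQC v'))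
  (hinj : Function.Injective ψ.toFun) (hinj' : Function.Injective ψ'.toFun)

theorem mul_step_f (h : 𝒬.IsSeminormal) (i : ι) {w w' : FreeMonoid Q}
    (hstep : (freeTensorQC 𝒬).f i w = some w')
    (hPw : MulP ψ ψ' hinj hinj' w) : MulP ψ ψ' hinj hinj' w' := by
  obtain ⟨a, b, ha, hb, rfl, hImg⟩ := hPw
  have hstepL : freeF 𝒬 i (FreeMonoid.toList a ++ FreeMonoid.toList b)
      = some (FreeMonoid.toList w') := FT_f_some_iff.1 hstep
  rw [freeF_append h i _ _] at hstepL
  have heb : freeEps 𝒬 i (FreeMonoid.toList (ψ'.fn hinj' ⟨b, hb⟩).1)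
      = freeEps 𝒬 i (FreeMonoid.toList b) :=
    ψ'.eps_eq i ⟨b, hb⟩ (ψ'.fn hinj' ⟨b, hb⟩) (ψ'.fn_spec hinj' ⟨b, hb⟩)
  have hpa : freePhi 𝒬 i (FreeMonoid.toList (ψ.fn hinj ⟨a, ha⟩).1)
      = freePhi 𝒬 i (FreeMonoid.toList a) :=
    ψ.phi_eq i ⟨a, ha⟩ (ψ.fn hinj ⟨a, ha⟩) (ψ.fn_spec hinj ⟨a, ha⟩)
  by_cases hcnd : freeEps 𝒬 i (FreeMonoid.toList b) < freePhi 𝒬 i (FreeMonoid.toList a)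
  · rw [if_pos hcnd] at hstepL
    obtain ⟨la, hla, hw'⟩ := Option.map_eq_some_iff.1 hstepL
    have haF : (freeTensorQC 𝒬).f i a = some (FreeMonoid.ofList la) := FT_f_some_iff.2 hla
    obtain ⟨hz, hcomp⟩ := comp_f_total (y := ⟨a, ha⟩) haF
    have hcommV := ψ.comm_f i ⟨a, ha⟩ ⟨FreeMonoid.ofList la, hz⟩ (ψ.fn hinj ⟨a, ha⟩)
      (ψ.fn hinj ⟨FreeMonoid.ofList la, hz⟩) hcomp (ψ.fn_spec hinj _) (ψ.fn_spec hinj _)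
    have hlistV : freeF 𝒬 i (FreeMonoid.toList (ψ.fn hinj ⟨a, ha⟩).1)
        = some (FreeMonoid.toList (ψ.fn hinj ⟨FreeMonoid.ofList la, hz⟩).1) :=
      FT_f_some_iff.1 (comp_f_some_iff.1 hcommV)
    have himg : (freeTensorQC 𝒬).f i ((ψ.fn hinj ⟨a, ha⟩).1 * (ψ'.fn hinj' ⟨b, hb⟩).1)
        = some ((ψ.fn hinj ⟨FreeMonoid.ofList la, hz⟩).1 * (ψ'.fn hinj' ⟨b, hb⟩).1) := by
      apply FT_f_some_iff.2
      show freeF 𝒬 i (FreeMonoid.toList (ψ.fn hinj ⟨a, ha⟩).1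
          ++ FreeMonoid.toList (ψ'.fn hinj' ⟨b, hb⟩).1) = _
      rw [freeF_append h i _ _, if_pos (by rw [heb, hpa]; exact hcnd), hlistV]
      rfl
    refine ⟨FreeMonoid.ofList la, b, hz, hb, ?_, ?_⟩
    · rw [← FreeMonoid.ofList_toList w', ← hw']
      rfl
    · exact Relation.EqvGen.trans _ _ _ hImg (Relation.EqvGen.rel _ _ ⟨i, Or.inl himg⟩)
  · rw [if_neg hcnd] at hstepL
    obtain ⟨lb, hlb, hw'⟩ := Option.map_eq_some_iff.1 hstepL
    have hbF : (freeTensorQC 𝒬).f i b = some (FreeMonoid.ofList lb) := FT_f_some_iff.2 hlb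
    obtain ⟨hz, hcomp⟩ := comp_f_total (y := ⟨b, hb⟩) hbF
    have hcommV := ψ'.comm_f i ⟨b, hb⟩ ⟨FreeMonoid.ofList lb, hz⟩ (ψ'.fn hinj' ⟨b, hb⟩)
      (ψ'.fn hinj' ⟨FreeMonoid.ofList lb, hz⟩) hcomp (ψ'.fn_spec hinj' _) (ψ'.fn_spec hinj' _)
    have hlistV : freeF 𝒬 i (FreeMonoid.toList (ψ'.fn hinj' ⟨b, hb⟩).1)
        = some (FreeMonoid.toList (ψ'.fn hinj' ⟨FreeMonoid.ofList lb, hz⟩).1) :=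
      FT_f_some_iff.1 (comp_f_some_iff.1 hcommV)
    have himg : (freeTensorQC 𝒬).f i ((ψ.fn hinj ⟨a, ha⟩).1 * (ψ'.fn hinj' ⟨b, hb⟩).1)
        = some ((ψ.fn hinj ⟨a, ha⟩).1 * (ψ'.fn hinj' ⟨FreeMonoid.ofList lb, hz⟩).1) := by
      apply FT_f_some_iff.2
      show freeF 𝒬 i (FreeMonoid.toList (ψ.fn hinj ⟨a, ha⟩).1
          ++ FreeMonoid.toList (ψ'.fn hinj' ⟨b, hb⟩).1) = _
      rw [freeF_append h i _ _, if_neg (by rw [heb, hpa]; exact hcnd), hlistV]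
      rfl
    refine ⟨a, FreeMonoid.ofList lb, ha, hz, ?_, ?_⟩
    · rw [← FreeMonoid.ofList_toList w', ← hw']
      rfl
    · exact Relation.EqvGen.trans _ _ _ hImg (Relation.EqvGen.rel _ _ ⟨i, Or.inl himg⟩)

theorem mul_step_e (h : 𝒬.IsSeminormal) (i : ι) {w w' : FreeMonoid Q}
    (hstep : (freeTensorQC 𝒬).e i w = some w')
    (hPw : MulP ψ ψ' hinj hinj' w) : MulP ψ ψ' hinj hinj' w' := by
  obtain ⟨a, b, ha, hb, rfl, hImg⟩ := hPw
  have hstepL : freeE 𝒬 i (FreeMonoid.toList a ++ FreeMonoid.toList b)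
      = some (FreeMonoid.toList w') := FT_e_some_iff.1 hstep
  rw [freeE_append h i _ _] at hstepL
  have heb : freeEps 𝒬 i (FreeMonoid.toList (ψ'.fn hinj' ⟨b, hb⟩).1)
      = freeEps 𝒬 i (FreeMonoid.toList b) :=
    ψ'.eps_eq i ⟨b, hb⟩ (ψ'.fn hinj' ⟨b, hb⟩) (ψ'.fn_spec hinj' ⟨b, hb⟩)
  have hpa : freePhi 𝒬 i (FreeMonoid.toList (ψ.fn hinj ⟨a, ha⟩).1)
      = freePhi 𝒬 i (FreeMonoid.toList a) :=
    ψ.phi_eq i ⟨a, ha⟩ (ψ.fn hinj ⟨a, ha⟩) (ψ.fn_spec hinj ⟨a, ha⟩)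
  by_cases hcnd : freeEps 𝒬 i (FreeMonoid.toList b) ≤ freePhi 𝒬 i (FreeMonoid.toList a)
  · rw [if_pos hcnd] at hstepL
    obtain ⟨la, hla, hw'⟩ := Option.map_eq_some_iff.1 hstepL
    have haF : (freeTensorQC 𝒬).e i a = some (FreeMonoid.ofList la) := FT_e_some_iff.2 hla
    obtain ⟨hz, hcomp⟩ := comp_e_total (y := ⟨a, ha⟩) haF
    have hcommV := ψ.comm_e i ⟨a, ha⟩ ⟨FreeMonoid.ofList la, hz⟩ (ψ.fn hinj ⟨a, ha⟩)
      (ψ.fn hinj ⟨FreeMonoid.ofList la, hz⟩) hcomp (ψ.fn_spec hinj _) (ψ.fn_spec hinj _)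
    have hlistV : freeE 𝒬 i (FreeMonoid.toList (ψ.fn hinj ⟨a, ha⟩).1)
        = some (FreeMonoid.toList (ψ.fn hinj ⟨FreeMonoid.ofList la, hz⟩).1) :=
      FT_e_some_iff.1 (comp_e_some_iff.1 hcommV)
    have himg : (freeTensorQC 𝒬).e i ((ψ.fn hinj ⟨a, ha⟩).1 * (ψ'.fn hinj' ⟨b, hb⟩).1)
        = some ((ψ.fn hinj ⟨FreeMonoid.ofList la, hz⟩).1 * (ψ'.fn hinj' ⟨b, hb⟩).1) := by
      apply FT_e_some_iff.2
      show freeE 𝒬 i (FreeMonoid.toList (ψ.fn hinj ⟨a, ha⟩).1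
          ++ FreeMonoid.toList (ψ'.fn hinj' ⟨b, hb⟩).1) = _
      rw [freeE_append h i _ _, if_pos (by rw [heb, hpa]; exact hcnd), hlistV]
      rfl
    refine ⟨FreeMonoid.ofList la, b, hz, hb, ?_, ?_⟩
    · rw [← FreeMonoid.ofList_toList w', ← hw']
      rfl
    · exact Relation.EqvGen.trans _ _ _ hImg
        (Relation.EqvGen.rel _ _ ⟨i, Or.inr (Or.inr (Or.inl himg))⟩)
  · rw [if_neg hcnd] at hstepL
    obtain ⟨lb, hlb, hw'⟩ := Option.map_eq_some_iff.1 hstepL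
    have hbF : (freeTensorQC 𝒬).e i b = some (FreeMonoid.ofList lb) := FT_e_some_iff.2 hlb
    obtain ⟨hz, hcomp⟩ := comp_e_total (y := ⟨b, hb⟩) hbF
    have hcommV := ψ'.comm_e i ⟨b, hb⟩ ⟨FreeMonoid.ofList lb, hz⟩ (ψ'.fn hinj' ⟨b, hb⟩)
      (ψ'.fn hinj' ⟨FreeMonoid.ofList lb, hz⟩) hcomp (ψ'.fn_spec hinj' _) (ψ'.fn_spec hinj' _)
    have hlistV : freeE 𝒬 i (FreeMonoid.toList (ψ'.fn hinj' ⟨b, hb⟩).1)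
        = some (FreeMonoid.toList (ψ'.fn hinj' ⟨FreeMonoid.ofList lb, hz⟩).1) :=
      FT_e_some_iff.1 (comp_e_some_iff.1 hcommV)
    have himg : (freeTensorQC 𝒬).e i ((ψ.fn hinj ⟨a, ha⟩).1 * (ψ'.fn hinj' ⟨b, hb⟩).1)
        = some ((ψ.fn hinj ⟨a, ha⟩).1 * (ψ'.fn hinj' ⟨FreeMonoid.ofList lb, hz⟩).1) := by
      apply FT_e_some_iff.2
      show freeE 𝒬 i (FreeMonoid.toList (ψ.fn hinj ⟨a, ha⟩).1
          ++ FreeMonoid.toList (ψ'.fn hinj' ⟨b, hb⟩).1) = _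
      rw [freeE_append h i _ _, if_neg (by rw [heb, hpa]; exact hcnd), hlistV]
      rfl
    refine ⟨a, FreeMonoid.ofList lb, ha, hz, ?_, ?_⟩
    · rw [← FreeMonoid.ofList_toList w', ← hw']
      rfl
    · exact Relation.EqvGen.trans _ _ _ hImg
        (Relation.EqvGen.rel _ _ ⟨i, Or.inr (Or.inr (Or.inl himg))⟩)

theorem mul_main (h : 𝒬.IsSeminormal)
    (hmψ : ψ.toFun (some ⟨u, Relation.EqvGen.refl u⟩) = some ⟨v, Relation.EqvGen.refl v⟩)
    (hmψ' : ψ'.toFun (some ⟨u', Relation.EqvGen.refl u'⟩)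
      = some ⟨v', Relation.EqvGen.refl v'⟩) :
    ∀ w, (freeTensorQC 𝒬).conn (u * u') w → MulP ψ ψ' hinj hinj' w := by
  intro w hw
  have hstep : ∀ (x y : FreeMonoid Q),
      (∃ i, (freeTensorQC 𝒬).f i x = some y ∨ (freeTensorQC 𝒬).f i y = some x ∨
        (freeTensorQC 𝒬).e i x = some y ∨ (freeTensorQC 𝒬).e i y = some x) →
      MulP ψ ψ' hinj hinj' x → MulP ψ ψ' hinj hinj' y := by
    rintro x y ⟨i, hcase⟩ hPx
    rcases hcase with hh | hh | hh | hh
    · exact mul_step_f ψ ψ' hinj hinj' h i hh hPx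
    · exact mul_step_e ψ ψ' hinj hinj' h i
        (FT_e_some_iff.2 (freeG2 h i (FT_f_some_iff.1 hh))) hPx
    · exact mul_step_e ψ ψ' hinj hinj' h i hh hPx
    · exact mul_step_f ψ ψ' hinj hinj' h i
        (FT_f_some_iff.2 (freeG1 h i (FT_e_some_iff.1 hh))) hPx
  have hiff := conn_ind (P := MulP ψ ψ' hinj hinj') ?_ hw
  · refine hiff.1 ?_
    refine ⟨u, u', Relation.EqvGen.refl u, Relation.EqvGen.refl u', rfl, ?_⟩
    have e1 : ψ.fn hinj ⟨u, Relation.EqvGen.refl u⟩ = ⟨v, Relation.EqvGen.refl v⟩ :=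
      Option.some.inj ((ψ.fn_spec hinj _).symm.trans hmψ)
    have e2 : ψ'.fn hinj' ⟨u', Relation.EqvGen.refl u'⟩ = ⟨v', Relation.EqvGen.refl v'⟩ :=
      Option.some.inj ((ψ'.fn_spec hinj' _).symm.trans hmψ')
    rw [e1, e2]
    exact Relation.EqvGen.refl _
  · intro x y hxy
    refine ⟨hstep x y hxy, hstep y x ?_⟩
    obtain ⟨i, hc⟩ := hxy
    exact ⟨i, by tauto⟩

/-- The underlying value of the product isomorphism. -/
noncomputable def mulVal
    (main : ∀ w, (freeTensorQC 𝒬).conn (u * u') w → MulP ψ ψ' hinj hinj' w)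
    (w : FreeMonoid Q) (hw : (freeTensorQC 𝒬).conn (u * u') w) : FreeMonoid Q :=
  (ψ.fn hinj ⟨(main w hw).choose, (main w hw).choose_spec.choose_spec.choose⟩).1 *
  (ψ'.fn hinj' ⟨(main w hw).choose_spec.choose,
    (main w hw).choose_spec.choose_spec.choose_spec.choose⟩).1

theorem mulVal_conn
    (main : ∀ w, (freeTensorQC 𝒬).conn (u * u') w → MulP ψ ψ' hinj hinj' w)
    (w : FreeMonoid Q) (hw : (freeTensorQC 𝒬).conn (u * u') w) :
    (freeTensorQC 𝒬).conn (v * v') (mulVal ψ ψ' hinj hinj' main w hw) :=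
  (main w hw).choose_spec.choose_spec.choose_spec.choose_spec.2

theorem mulVal_decomp
    (main : ∀ w, (freeTensorQC 𝒬).conn (u * u') w → MulP ψ ψ' hinj hinj' w)
    (w : FreeMonoid Q) (hw : (freeTensorQC 𝒬).conn (u * u') w) :
    w = (main w hw).choose * (main w hw).choose_spec.choose :=
  (main w hw).choose_spec.choose_spec.choose_spec.choose_spec.1

theorem mulVal_eq
    (main : ∀ w, (freeTensorQC 𝒬).conn (u * u') w → MulP ψ ψ' hinj hinj' w)
    {w : FreeMonoid Q} (hw : (freeTensorQC 𝒬).conn (u * u') w)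
    {a b : FreeMonoid Q} (ha : (freeTensorQC 𝒬).conn u a) (hb : (freeTensorQC 𝒬).conn u' b)
    (hab : w = a * b) :
    mulVal ψ ψ' hinj hinj' main w hw = (ψ.fn hinj ⟨a, ha⟩).1 * (ψ'.fn hinj' ⟨b, hb⟩).1 := by
  have ha₀ := (main w hw).choose_spec.choose_spec.choose
  have hab₀ := mulVal_decomp ψ ψ' hinj hinj' main w hw
  have hla : (FreeMonoid.toList a).length = (FreeMonoid.toList (main w hw).choose).length := by
    rw [conn_length ha, conn_length (main w hw).choose_spec.choose_spec.choose]
  have happ : FreeMonoid.toList a ++ FreeMonoid.toList b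
      = FreeMonoid.toList (main w hw).choose
        ++ FreeMonoid.toList (main w hw).choose_spec.choose :=
    congrArg FreeMonoid.toList (hab.symm.trans hab₀)
  obtain ⟨h1, h2⟩ := List.append_inj happ hla
  have haa : a = (main w hw).choose := by
    rw [← FreeMonoid.ofList_toList a, h1, FreeMonoid.ofList_toList]
  have hbb : b = (main w hw).choose_spec.choose := by
    rw [← FreeMonoid.ofList_toList b, h2, FreeMonoid.ofList_toList]
  subst haa
  subst hbb
  rfl

end AuxMul
section AuxMul2

variable {V : Type*} [NormedAddCommGroup V] [InnerProductSpace ℝ V] {ι : Type*}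
  {S : QCSetting V ι} {Q : Type*} {𝒬 : QC S Q}

theorem plactic_mul (h : 𝒬.IsSeminormal) {u v u' v' : FreeMonoid Q}
    (h1 : placticRel 𝒬 u v) (h2 : placticRel 𝒬 u' v') :
    placticRel 𝒬 (u * u') (v * v') := by
  classical
  obtain ⟨ψ, hbψ, hmψ⟩ := h1
  obtain ⟨ψ', hbψ', hmψ'⟩ := h2
  obtain ⟨τ, hbτ, hmτ, hRT1, hRT2⟩ := plactic_inv h ψ hbψ hmψ
  obtain ⟨τ', hbτ', hmτ', hRT1', hRT2'⟩ := plactic_inv h ψ' hbψ' hmψ'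
  have hinj : Function.Injective ψ.toFun := hbψ.1
  have hinj' : Function.Injective ψ'.toFun := hbψ'.1
  have hτinj : Function.Injective τ.toFun := hbτ.1
  have hτinj' : Function.Injective τ'.toFun := hbτ'.1
  have main := mul_main ψ ψ' hinj hinj' h hmψ hmψ'
  have main' := mul_main τ τ' hτinj hτinj' h hmτ hmτ'
  refine ⟨⟨fun o => o.map (fun x => ⟨mulVal ψ ψ' hinj hinj' main x.1 x.2,
      mulVal_conn ψ ψ' hinj hinj' main x.1 x.2⟩), rfl, ?_, ?_, ?_, ?_, ?_⟩, ⟨?_, ?_⟩, ?_⟩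
  · -- wt_eq
    intro x y hxy
    obtain rfl := Option.some.inj hxy
    obtain ⟨a, b, ha, hb, hab, -⟩ := main x.1 x.2
    have hwa : freeWt 𝒬 (FreeMonoid.toList (ψ.fn hinj ⟨a, ha⟩).1)
        = freeWt 𝒬 (FreeMonoid.toList a) := ψ.wt_eq ⟨a, ha⟩ _ (ψ.fn_spec hinj _)
    have hwb : freeWt 𝒬 (FreeMonoid.toList (ψ'.fn hinj' ⟨b, hb⟩).1)
        = freeWt 𝒬 (FreeMonoid.toList b) := ψ'.wt_eq ⟨b, hb⟩ _ (ψ'.fn_spec hinj' _)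
    show freeWt 𝒬 (FreeMonoid.toList (mulVal ψ ψ' hinj hinj' main x.1 x.2))
        = freeWt 𝒬 (FreeMonoid.toList x.1)
    rw [mulVal_eq ψ ψ' hinj hinj' main x.2 ha hb hab, hab]
    show freeWt 𝒬 (FreeMonoid.toList (ψ.fn hinj ⟨a, ha⟩).1
        ++ FreeMonoid.toList (ψ'.fn hinj' ⟨b, hb⟩).1)
      = freeWt 𝒬 (FreeMonoid.toList a ++ FreeMonoid.toList b)
    rw [freeWt_append, freeWt_append, hwa, hwb]
  · -- eps_eq
    intro i x y hxy
    obtain rfl := Option.some.inj hxy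
    obtain ⟨a, b, ha, hb, hab, -⟩ := main x.1 x.2
    have hwa : freeWt 𝒬 (FreeMonoid.toList (ψ.fn hinj ⟨a, ha⟩).1)
        = freeWt 𝒬 (FreeMonoid.toList a) := ψ.wt_eq ⟨a, ha⟩ _ (ψ.fn_spec hinj _)
    have hea : freeEps 𝒬 i (FreeMonoid.toList (ψ.fn hinj ⟨a, ha⟩).1)
        = freeEps 𝒬 i (FreeMonoid.toList a) := ψ.eps_eq i ⟨a, ha⟩ _ (ψ.fn_spec hinj _)
    have heb : freeEps 𝒬 i (FreeMonoid.toList (ψ'.fn hinj' ⟨b, hb⟩).1)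
        = freeEps 𝒬 i (FreeMonoid.toList b) := ψ'.eps_eq i ⟨b, hb⟩ _ (ψ'.fn_spec hinj' _)
    show freeEps 𝒬 i (FreeMonoid.toList (mulVal ψ ψ' hinj hinj' main x.1 x.2))
        = freeEps 𝒬 i (FreeMonoid.toList x.1)
    rw [mulVal_eq ψ ψ' hinj hinj' main x.2 ha hb hab, hab]
    show freeEps 𝒬 i (FreeMonoid.toList (ψ.fn hinj ⟨a, ha⟩).1
        ++ FreeMonoid.toList (ψ'.fn hinj' ⟨b, hb⟩).1)
      = freeEps 𝒬 i (FreeMonoid.toList a ++ FreeMonoid.toList b)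
    rw [freeEps_append h, freeEps_append h, hea, heb, hwa]
  · -- phi_eq
    intro i x y hxy
    obtain rfl := Option.some.inj hxy
    obtain ⟨a, b, ha, hb, hab, -⟩ := main x.1 x.2
    have hwb : freeWt 𝒬 (FreeMonoid.toList (ψ'.fn hinj' ⟨b, hb⟩).1)
        = freeWt 𝒬 (FreeMonoid.toList b) := ψ'.wt_eq ⟨b, hb⟩ _ (ψ'.fn_spec hinj' _)
    have hpa : freePhi 𝒬 i (FreeMonoid.toList (ψ.fn hinj ⟨a, ha⟩).1)
        = freePhi 𝒬 i (FreeMonoid.toList a) := ψ.phi_eq i ⟨a, ha⟩ _ (ψ.fn_spec hinj _)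
    have hpb : freePhi 𝒬 i (FreeMonoid.toList (ψ'.fn hinj' ⟨b, hb⟩).1)
        = freePhi 𝒬 i (FreeMonoid.toList b) := ψ'.phi_eq i ⟨b, hb⟩ _ (ψ'.fn_spec hinj' _)
    show freePhi 𝒬 i (FreeMonoid.toList (mulVal ψ ψ' hinj hinj' main x.1 x.2))
        = freePhi 𝒬 i (FreeMonoid.toList x.1)
    rw [mulVal_eq ψ ψ' hinj hinj' main x.2 ha hb hab, hab]
    show freePhi 𝒬 i (FreeMonoid.toList (ψ.fn hinj ⟨a, ha⟩).1
        ++ FreeMonoid.toList (ψ'.fn hinj' ⟨b, hb⟩).1)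
      = freePhi 𝒬 i (FreeMonoid.toList a ++ FreeMonoid.toList b)
    rw [freePhi_append h, freePhi_append h, hpa, hpb, hwb]
  · -- comm_e
    intro i x x' y y' he hxy hxy'
    obtain rfl := Option.some.inj hxy
    obtain rfl := Option.some.inj hxy'
    obtain ⟨a, b, ha, hb, hab, -⟩ := main x.1 x.2
    have hstepL : freeE 𝒬 i (FreeMonoid.toList a ++ FreeMonoid.toList b)
        = some (FreeMonoid.toList x'.1) := by
      have hh := FT_e_some_iff.1 (comp_e_some_iff.1 he)
      rw [hab] at hh
      exact hh
    rw [freeE_append h i _ _] at hstepL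
    have heb : freeEps 𝒬 i (FreeMonoid.toList (ψ'.fn hinj' ⟨b, hb⟩).1)
        = freeEps 𝒬 i (FreeMonoid.toList b) := ψ'.eps_eq i ⟨b, hb⟩ _ (ψ'.fn_spec hinj' _)
    have hpa : freePhi 𝒬 i (FreeMonoid.toList (ψ.fn hinj ⟨a, ha⟩).1)
        = freePhi 𝒬 i (FreeMonoid.toList a) := ψ.phi_eq i ⟨a, ha⟩ _ (ψ.fn_spec hinj _)
    apply comp_e_some_iff.2
    apply FT_e_some_iff.2
    by_cases hcnd : freeEps 𝒬 i (FreeMonoid.toList b) ≤ freePhi 𝒬 i (FreeMonoid.toList a)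
    · rw [if_pos hcnd] at hstepL
      obtain ⟨la, hla, hw'⟩ := Option.map_eq_some_iff.1 hstepL
      have haF : (freeTensorQC 𝒬).e i a = some (FreeMonoid.ofList la) := FT_e_some_iff.2 hla
      obtain ⟨hz, hcomp⟩ := comp_e_total (y := ⟨a, ha⟩) haF
      have hcommV := ψ.comm_e i ⟨a, ha⟩ ⟨FreeMonoid.ofList la, hz⟩ (ψ.fn hinj ⟨a, ha⟩)
        (ψ.fn hinj ⟨FreeMonoid.ofList la, hz⟩) hcomp (ψ.fn_spec hinj _) (ψ.fn_spec hinj _)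
      have hlistV : freeE 𝒬 i (FreeMonoid.toList (ψ.fn hinj ⟨a, ha⟩).1)
          = some (FreeMonoid.toList (ψ.fn hinj ⟨FreeMonoid.ofList la, hz⟩).1) :=
        FT_e_some_iff.1 (comp_e_some_iff.1 hcommV)
      have hx' : x'.1 = FreeMonoid.ofList la * b := by
        rw [← FreeMonoid.ofList_toList x'.1, ← hw']
        rfl
      show freeE 𝒬 i (FreeMonoid.toList (mulVal ψ ψ' hinj hinj' main x.1 x.2))
          = some (FreeMonoid.toList (mulVal ψ ψ' hinj hinj' main x'.1 x'.2))
      rw [mulVal_eq ψ ψ' hinj hinj' main x.2 ha hb hab,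
        mulVal_eq ψ ψ' hinj hinj' main x'.2 hz hb hx']
      show freeE 𝒬 i (FreeMonoid.toList (ψ.fn hinj ⟨a, ha⟩).1
            ++ FreeMonoid.toList (ψ'.fn hinj' ⟨b, hb⟩).1)
          = some (FreeMonoid.toList (ψ.fn hinj ⟨FreeMonoid.ofList la, hz⟩).1
            ++ FreeMonoid.toList (ψ'.fn hinj' ⟨b, hb⟩).1)
      rw [freeE_append h i _ _, if_pos (by rw [heb, hpa]; exact hcnd), hlistV]
      rfl
    · rw [if_neg hcnd] at hstepL
      obtain ⟨lb, hlb, hw'⟩ := Option.map_eq_some_iff.1 hstepL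
      have hbF : (freeTensorQC 𝒬).e i b = some (FreeMonoid.ofList lb) := FT_e_some_iff.2 hlb
      obtain ⟨hz, hcomp⟩ := comp_e_total (y := ⟨b, hb⟩) hbF
      have hcommV := ψ'.comm_e i ⟨b, hb⟩ ⟨FreeMonoid.ofList lb, hz⟩ (ψ'.fn hinj' ⟨b, hb⟩)
        (ψ'.fn hinj' ⟨FreeMonoid.ofList lb, hz⟩) hcomp (ψ'.fn_spec hinj' _) (ψ'.fn_spec hinj' _)
      have hlistV : freeE 𝒬 i (FreeMonoid.toList (ψ'.fn hinj' ⟨b, hb⟩).1)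
          = some (FreeMonoid.toList (ψ'.fn hinj' ⟨FreeMonoid.ofList lb, hz⟩).1) :=
        FT_e_some_iff.1 (comp_e_some_iff.1 hcommV)
      have hx' : x'.1 = a * FreeMonoid.ofList lb := by
        rw [← FreeMonoid.ofList_toList x'.1, ← hw']
        rfl
      show freeE 𝒬 i (FreeMonoid.toList (mulVal ψ ψ' hinj hinj' main x.1 x.2))
          = some (FreeMonoid.toList (mulVal ψ ψ' hinj hinj' main x'.1 x'.2))
      rw [mulVal_eq ψ ψ' hinj hinj' main x.2 ha hb hab,
        mulVal_eq ψ ψ' hinj hinj' main x'.2 ha hz hx']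
      show freeE 𝒬 i (FreeMonoid.toList (ψ.fn hinj ⟨a, ha⟩).1
            ++ FreeMonoid.toList (ψ'.fn hinj' ⟨b, hb⟩).1)
          = some (FreeMonoid.toList (ψ.fn hinj ⟨a, ha⟩).1
            ++ FreeMonoid.toList (ψ'.fn hinj' ⟨FreeMonoid.ofList lb, hz⟩).1)
      rw [freeE_append h i _ _, if_neg (by rw [heb, hpa]; exact hcnd), hlistV]
      rfl
  · -- comm_f
    intro i x x' y y' he hxy hxy'
    obtain rfl := Option.some.inj hxy
    obtain rfl := Option.some.inj hxy'
    obtain ⟨a, b, ha, hb, hab, -⟩ := main x.1 x.2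
    have hstepL : freeF 𝒬 i (FreeMonoid.toList a ++ FreeMonoid.toList b)
        = some (FreeMonoid.toList x'.1) := by
      have hh := FT_f_some_iff.1 (comp_f_some_iff.1 he)
      rw [hab] at hh
      exact hh
    rw [freeF_append h i _ _] at hstepL
    have heb : freeEps 𝒬 i (FreeMonoid.toList (ψ'.fn hinj' ⟨b, hb⟩).1)
        = freeEps 𝒬 i (FreeMonoid.toList b) := ψ'.eps_eq i ⟨b, hb⟩ _ (ψ'.fn_spec hinj' _)
    have hpa : freePhi 𝒬 i (FreeMonoid.toList (ψ.fn hinj ⟨a, ha⟩).1)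
        = freePhi 𝒬 i (FreeMonoid.toList a) := ψ.phi_eq i ⟨a, ha⟩ _ (ψ.fn_spec hinj _)
    apply comp_f_some_iff.2
    apply FT_f_some_iff.2
    by_cases hcnd : freeEps 𝒬 i (FreeMonoid.toList b) < freePhi 𝒬 i (FreeMonoid.toList a)
    · rw [if_pos hcnd] at hstepL
      obtain ⟨la, hla, hw'⟩ := Option.map_eq_some_iff.1 hstepL
      have haF : (freeTensorQC 𝒬).f i a = some (FreeMonoid.ofList la) := FT_f_some_iff.2 hla
      obtain ⟨hz, hcomp⟩ := comp_f_total (y := ⟨a, ha⟩) haF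
      have hcommV := ψ.comm_f i ⟨a, ha⟩ ⟨FreeMonoid.ofList la, hz⟩ (ψ.fn hinj ⟨a, ha⟩)
        (ψ.fn hinj ⟨FreeMonoid.ofList la, hz⟩) hcomp (ψ.fn_spec hinj _) (ψ.fn_spec hinj _)
      have hlistV : freeF 𝒬 i (FreeMonoid.toList (ψ.fn hinj ⟨a, ha⟩).1)
          = some (FreeMonoid.toList (ψ.fn hinj ⟨FreeMonoid.ofList la, hz⟩).1) :=
        FT_f_some_iff.1 (comp_f_some_iff.1 hcommV)
      have hx' : x'.1 = FreeMonoid.ofList la * b := by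
        rw [← FreeMonoid.ofList_toList x'.1, ← hw']
        rfl
      show freeF 𝒬 i (FreeMonoid.toList (mulVal ψ ψ' hinj hinj' main x.1 x.2))
          = some (FreeMonoid.toList (mulVal ψ ψ' hinj hinj' main x'.1 x'.2))
      rw [mulVal_eq ψ ψ' hinj hinj' main x.2 ha hb hab,
        mulVal_eq ψ ψ' hinj hinj' main x'.2 hz hb hx']
      show freeF 𝒬 i (FreeMonoid.toList (ψ.fn hinj ⟨a, ha⟩).1
            ++ FreeMonoid.toList (ψ'.fn hinj' ⟨b, hb⟩).1)
          = some (FreeMonoid.toList (ψ.fn hinj ⟨FreeMonoid.ofList la, hz⟩).1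
            ++ FreeMonoid.toList (ψ'.fn hinj' ⟨b, hb⟩).1)
      rw [freeF_append h i _ _, if_pos (by rw [heb, hpa]; exact hcnd), hlistV]
      rfl
    · rw [if_neg hcnd] at hstepL
      obtain ⟨lb, hlb, hw'⟩ := Option.map_eq_some_iff.1 hstepL
      have hbF : (freeTensorQC 𝒬).f i b = some (FreeMonoid.ofList lb) := FT_f_some_iff.2 hlb
      obtain ⟨hz, hcomp⟩ := comp_f_total (y := ⟨b, hb⟩) hbF
      have hcommV := ψ'.comm_f i ⟨b, hb⟩ ⟨FreeMonoid.ofList lb, hz⟩ (ψ'.fn hinj' ⟨b, hb⟩)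
        (ψ'.fn hinj' ⟨FreeMonoid.ofList lb, hz⟩) hcomp (ψ'.fn_spec hinj' _) (ψ'.fn_spec hinj' _)
      have hlistV : freeF 𝒬 i (FreeMonoid.toList (ψ'.fn hinj' ⟨b, hb⟩).1)
          = some (FreeMonoid.toList (ψ'.fn hinj' ⟨FreeMonoid.ofList lb, hz⟩).1) :=
        FT_f_some_iff.1 (comp_f_some_iff.1 hcommV)
      have hx' : x'.1 = a * FreeMonoid.ofList lb := by
        rw [← FreeMonoid.ofList_toList x'.1, ← hw']
        rfl
      show freeF 𝒬 i (FreeMonoid.toList (mulVal ψ ψ' hinj hinj' main x.1 x.2))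
          = some (FreeMonoid.toList (mulVal ψ ψ' hinj hinj' main x'.1 x'.2))
      rw [mulVal_eq ψ ψ' hinj hinj' main x.2 ha hb hab,
        mulVal_eq ψ ψ' hinj hinj' main x'.2 ha hz hx']
      show freeF 𝒬 i (FreeMonoid.toList (ψ.fn hinj ⟨a, ha⟩).1
            ++ FreeMonoid.toList (ψ'.fn hinj' ⟨b, hb⟩).1)
          = some (FreeMonoid.toList (ψ.fn hinj ⟨a, ha⟩).1
            ++ FreeMonoid.toList (ψ'.fn hinj' ⟨FreeMonoid.ofList lb, hz⟩).1)
      rw [freeF_append h i _ _, if_neg (by rw [heb, hpa]; exact hcnd), hlistV]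
      rfl
  · -- injective
    intro o₁ o₂ heq
    cases o₁ with
    | none =>
      cases o₂ with
      | none => rfl
      | some x₂ => simp at heq
    | some x₁ =>
      cases o₂ with
      | none => simp at heq
      | some x₂ =>
        obtain ⟨a₁, b₁, ha₁, hb₁, hab₁, -⟩ := main x₁.1 x₁.2
        obtain ⟨a₂, b₂, ha₂, hb₂, hab₂, -⟩ := main x₂.1 x₂.2
        have hval : mulVal ψ ψ' hinj hinj' main x₁.1 x₁.2
            = mulVal ψ ψ' hinj hinj' main x₂.1 x₂.2 :=
          congrArg Subtype.val (Option.some.inj heq)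
        rw [mulVal_eq ψ ψ' hinj hinj' main x₁.2 ha₁ hb₁ hab₁,
          mulVal_eq ψ ψ' hinj hinj' main x₂.2 ha₂ hb₂ hab₂] at hval
        have happ : FreeMonoid.toList (ψ.fn hinj ⟨a₁, ha₁⟩).1
              ++ FreeMonoid.toList (ψ'.fn hinj' ⟨b₁, hb₁⟩).1
            = FreeMonoid.toList (ψ.fn hinj ⟨a₂, ha₂⟩).1
              ++ FreeMonoid.toList (ψ'.fn hinj' ⟨b₂, hb₂⟩).1 :=
          congrArg FreeMonoid.toList hval
        have hlen : (FreeMonoid.toList (ψ.fn hinj ⟨a₁, ha₁⟩).1).length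
            = (FreeMonoid.toList (ψ.fn hinj ⟨a₂, ha₂⟩).1).length := by
          rw [conn_length (ψ.fn hinj ⟨a₁, ha₁⟩).2, conn_length (ψ.fn hinj ⟨a₂, ha₂⟩).2]
        obtain ⟨hh1, hh2⟩ := List.append_inj happ hlen
        have hgA : ψ.fn hinj ⟨a₁, ha₁⟩ = ψ.fn hinj ⟨a₂, ha₂⟩ := by
          apply Subtype.ext
          rw [← FreeMonoid.ofList_toList (ψ.fn hinj ⟨a₁, ha₁⟩).1, hh1,
            FreeMonoid.ofList_toList]
        have hgB : ψ'.fn hinj' ⟨b₁, hb₁⟩ = ψ'.fn hinj' ⟨b₂, hb₂⟩ := by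
          apply Subtype.ext
          rw [← FreeMonoid.ofList_toList (ψ'.fn hinj' ⟨b₁, hb₁⟩).1, hh2,
            FreeMonoid.ofList_toList]
        have ha12 : a₁ = a₂ := by
          have hsub := hinj (show ψ.toFun (some ⟨a₁, ha₁⟩) = ψ.toFun (some ⟨a₂, ha₂⟩) by
            rw [ψ.fn_spec hinj ⟨a₁, ha₁⟩, ψ.fn_spec hinj ⟨a₂, ha₂⟩, hgA])
          exact congrArg Subtype.val (Option.some.inj hsub)
        have hb12 : b₁ = b₂ := by
          have hsub := hinj' (show ψ'.toFun (some ⟨b₁, hb₁⟩) = ψ'.toFun (some ⟨b₂, hb₂⟩) by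
            rw [ψ'.fn_spec hinj' ⟨b₁, hb₁⟩, ψ'.fn_spec hinj' ⟨b₂, hb₂⟩, hgB])
          exact congrArg Subtype.val (Option.some.inj hsub)
        have hx12 : x₁ = x₂ := by
          apply Subtype.ext
          rw [hab₁, hab₂, ha12, hb12]
        rw [hx12]
  · -- surjective
    intro o
    cases o with
    | none => exact ⟨none, rfl⟩
    | some z =>
      obtain ⟨c, d, hc, hd, hzd, hconnW⟩ := main' z.1 z.2
      refine ⟨some ⟨(τ.fn hτinj ⟨c, hc⟩).1 * (τ'.fn hτinj' ⟨d, hd⟩).1, hconnW⟩, ?_⟩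
      apply congrArg some
      apply Subtype.ext
      show mulVal ψ ψ' hinj hinj' main _ hconnW = z.1
      have hA : ψ.fn hinj ⟨(τ.fn hτinj ⟨c, hc⟩).1, (τ.fn hτinj ⟨c, hc⟩).2⟩ = ⟨c, hc⟩ := by
        apply Option.some.inj
        rw [← ψ.fn_spec hinj _]
        have hrt := hRT1 (some ⟨c, hc⟩)
        rw [τ.fn_spec hτinj ⟨c, hc⟩] at hrt
        exact hrt
      have hB : ψ'.fn hinj' ⟨(τ'.fn hτinj' ⟨d, hd⟩).1, (τ'.fn hτinj' ⟨d, hd⟩).2⟩ = ⟨d, hd⟩ := by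
        apply Option.some.inj
        rw [← ψ'.fn_spec hinj' _]
        have hrt := hRT1' (some ⟨d, hd⟩)
        rw [τ'.fn_spec hτinj' ⟨d, hd⟩] at hrt
        exact hrt
      rw [mulVal_eq ψ ψ' hinj hinj' main hconnW (τ.fn hτinj ⟨c, hc⟩).2
        (τ'.fn hτinj' ⟨d, hd⟩).2 rfl, hA, hB]
      exact hzd.symm
  · -- maps u * u' to v * v'
    have e1 : ψ.fn hinj ⟨u, Relation.EqvGen.refl u⟩ = ⟨v, Relation.EqvGen.refl v⟩ :=
      Option.some.inj ((ψ.fn_spec hinj _).symm.trans hmψ)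
    have e2 : ψ'.fn hinj' ⟨u', Relation.EqvGen.refl u'⟩ = ⟨v', Relation.EqvGen.refl v'⟩ :=
      Option.some.inj ((ψ'.fn_spec hinj' _).symm.trans hmψ')
    apply congrArg some
    apply Subtype.ext
    show mulVal ψ ψ' hinj hinj' main (u * u') (Relation.EqvGen.refl (u * u')) = v * v'
    rw [mulVal_eq ψ ψ' hinj hinj' main (Relation.EqvGen.refl (u * u'))
      (Relation.EqvGen.refl u) (Relation.EqvGen.refl u') rfl, e1, e2]

end AuxMul2
/-- The plactic congruence `≈` on `F^⊗(Q)` is a monoid congruence on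
the free monoid `Q*`: it is an equivalence relation, and it is compatible with
concatenation. -/
theorem placticRel_isCongruence {V : Type*} [NormedAddCommGroup V]
    [InnerProductSpace ℝ V] {ι : Type*} {S : QCSetting V ι} {Q : Type*}
    (𝒬 : QC S Q) (h : 𝒬.IsSeminormal) :
    Equivalence (placticRel 𝒬) ∧
    ∀ u v u' v' : FreeMonoid Q, placticRel 𝒬 u v → placticRel 𝒬 u' v' →
      placticRel 𝒬 (u * u') (v * v') := by
  refine ⟨⟨fun x => plactic_refl 𝒬 x, fun hxy => plactic_symm h hxy,
    fun hxy hyz => plactic_trans hxy hyz⟩, ?_⟩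
  intro u v u' v' h1 h2
  exact plactic_mul h h1 h2
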